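/- arXiv:2105.01504 — 3 statements merged into one kernel-verified Lean document; each statement's English description precedes it below -/
import Mathlib

section
/- Let Σ be a tropical fan of pure dimension d in ℝ^n. Then Σ is locally irreducible if and only if Σ is normal and, for every η ∈ Σ, the star of η is connected through codimension one. -/
/- Formalization of polyhedral-geometry notions: rational fans in ℝⁿ with lattice ℤⁿ,
tropical fans (balancing condition), conewise integral linear functions, Minkowski
weights, etc., following the paper "Homology of tropical fans" by Amini–Piquerez. -/

open Classical MvPolynomial
open scoped TensorProduct DirectSum

noncomputable section

/-- The ambient space `ℝ^n`. -/
abbrev V (n : ℕ) : Type := Fin n → ℝ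

/-- The inclusion of the lattice `ℤ^n` into `ℝ^n`. -/
def intVec {n : ℕ} (v : Fin n → ℤ) : V n := fun i => (v i : ℝ)

lemma intVec_zero {n : ℕ} : intVec (0 : Fin n → ℤ) = 0 := by
  funext i; simp [intVec]

lemma intVec_add {n : ℕ} (a b : Fin n → ℤ) : intVec (a + b) = intVec a + intVec b := by
  funext i; simp [intVec]

lemma intVec_neg {n : ℕ} (a : Fin n → ℤ) : intVec (-a) = -intVec a := by
  funext i; simp [intVec]

/-- The pairing between `M = Hom(ℤ^n, ℤ)` (an element of which is represented by its
coefficient vector) and the lattice `ℤ^n`. -/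
def pairZ {n : ℕ} (ℓ v : Fin n → ℤ) : ℤ := ∑ i, ℓ i * v i

/-- The pairing between an element of `M` and a vector of `ℝ^n`, i.e. the linear form
on `ℝ^n` defined by an element of `M`. -/
def pairR {n : ℕ} (ℓ : Fin n → ℤ) (x : V n) : ℝ := ∑ i, (ℓ i : ℝ) * x i

/-- `σ` is a rational cone: the set of nonnegative combinations of a finite set of
integer vectors. -/
def IsRationalCone {n : ℕ} (σ : Set (V n)) : Prop :=
  ∃ S : Finset (Fin n → ℤ),
    σ = {x | ∃ lam : (Fin n → ℤ) → ℝ, (∀ v, 0 ≤ lam v) ∧ x = ∑ v ∈ S, lam v • intVec v}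

/-- A cone is strongly convex if `σ ∩ (-σ) = {0}`. -/
def StronglyConvex {n : ℕ} (σ : Set (V n)) : Prop := σ ∩ (-σ) = {0}

/-- `τ` is a face of the cone `σ`: `τ = σ ∩ ker ℓ` for a linear form `ℓ` nonnegative
on `σ`. -/
def IsFaceOf {n : ℕ} (τ σ : Set (V n)) : Prop :=
  ∃ ℓ : (V n) →ₗ[ℝ] ℝ, (∀ x ∈ σ, 0 ≤ ℓ x) ∧ τ = σ ∩ {x | ℓ x = 0}

/-- A (rational) fan in `ℝ^n`: a finite nonempty collection of strongly convex rational
cones, closed under taking faces, such that the intersection of any two cones is a face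
of each of them. -/
structure IsFan {n : ℕ} (F : Finset (Set (V n))) : Prop where
  nonempty : F.Nonempty
  rat : ∀ σ ∈ F, IsRationalCone σ
  convex : ∀ σ ∈ F, StronglyConvex σ
  faces_mem : ∀ σ ∈ F, ∀ τ : Set (V n), IsFaceOf τ σ → τ ∈ F
  inter_face_left : ∀ σ ∈ F, ∀ σ' ∈ F, IsFaceOf (σ ∩ σ') σ
  inter_face_right : ∀ σ ∈ F, ∀ σ' ∈ F, IsFaceOf (σ ∩ σ') σ'

/-- The dimension of a cone: the dimension of its real linear span. -/
def dimC {n : ℕ} (σ : Set (V n)) : ℕ := Module.finrank ℝ ↥(Submodule.span ℝ σ)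

/-- `v ∈ N_σ := ℤ^n ∩ span_ℝ(σ)`. -/
def memLat {n : ℕ} (σ : Set (V n)) (v : Fin n → ℤ) : Prop :=
  intVec v ∈ Submodule.span ℝ σ

/-- `v` is a normal vector `n_{σ/τ}` for the codimension-one face `τ` of `σ`:
`v ∈ N_σ ∩ (σ + span_ℝ(τ))` and `N_τ + ℤ·v = N_σ`. -/
def IsNormalVector {n : ℕ} (σ τ : Set (V n)) (v : Fin n → ℤ) : Prop :=
  memLat σ v ∧ (∃ y ∈ σ, ∃ z ∈ Submodule.span ℝ τ, intVec v = y + z) ∧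
  ∀ w : Fin n → ℤ, memLat σ w ↔ ∃ u : Fin n → ℤ, ∃ k : ℤ, memLat τ u ∧ w = u + k • v

/-- The cones of `F` of dimension `d` containing `τ`. -/
def facets {n : ℕ} (F : Finset (Set (V n))) (d : ℕ) (τ : Set (V n)) :
    Finset (Set (V n)) :=
  F.filter fun σ => dimC σ = d ∧ τ ⊆ σ

/-- `Σ_k`: the `k`-dimensional cones of the fan. -/
def conesK {n : ℕ} (F : Finset (Set (V n))) (k : ℕ) : Finset (Set (V n)) :=
  F.filter fun σ => dimC σ = k

/-- A tropical fan of pure dimension `d`: a rational fan, pure of dimension `d`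
(every maximal cone has dimension `d`), satisfying the balancing condition: for every
`τ ∈ Σ_{d-1}` and any choice of normal vectors, `∑_{σ ⊃ τ} n_{σ/τ} ∈ N_τ`. -/
def IsTropicalFan {n : ℕ} (F : Finset (Set (V n))) (d : ℕ) : Prop :=
  IsFan F ∧ (∀ σ ∈ F, (∀ η ∈ F, σ ⊆ η → σ = η) → dimC σ = d) ∧
  ∀ τ ∈ F, dimC τ = d - 1 →
    ∀ v : Set (V n) → Fin n → ℤ,
      (∀ σ ∈ facets F d τ, IsNormalVector σ τ (v σ)) →
      memLat τ (∑ σ ∈ facets F d τ, v σ)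

/-- `f` is conewise integral linear on the fan `F`: on each cone it agrees with an
element of `M`. -/
def ConewiseLinear {n : ℕ} (F : Finset (Set (V n))) (f : V n → ℝ) : Prop :=
  ∀ σ ∈ F, ∃ ℓ : Fin n → ℤ, ∀ x ∈ σ, f x = pairR ℓ x

/-- A Minkowski weight of dimension `k` on the fan `F`: an integer weight on `Σ_k`
satisfying the balancing condition. -/
def IsMinkowskiWeight {n : ℕ} (F : Finset (Set (V n))) (k : ℕ) (w : Set (V n) → ℤ) :
    Prop :=
  ∀ τ ∈ F, dimC τ = k - 1 →
    ∀ u : Set (V n) → Fin n → ℤ,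
      (∀ σ ∈ facets F k τ, IsNormalVector σ τ (u σ)) →
      memLat τ (∑ σ ∈ facets F k τ, w σ • u σ)

/-- A tropical fan of dimension `d` is normal (smooth in codimension one) if, for every
`τ ∈ Σ_{d-1}`, any choice of normal vectors and any real coefficients `a_σ` with
`∑_{σ ⊃ τ} a_σ · n_{σ/τ} ∈ span_ℝ(τ)`, all the `a_σ` are equal. -/
def IsNormalTropicalFan {n : ℕ} (F : Finset (Set (V n))) (d : ℕ) : Prop :=
  ∀ τ ∈ F, dimC τ = d - 1 →
    ∀ v : Set (V n) → Fin n → ℤ,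
      (∀ σ ∈ facets F d τ, IsNormalVector σ τ (v σ)) →
      ∀ a : Set (V n) → ℝ,
        (∑ σ ∈ facets F d τ, a σ • intVec (v σ)) ∈ Submodule.span ℝ τ →
        ∀ σ ∈ facets F d τ, ∀ σ' ∈ facets F d τ, a σ = a σ'

/-- The tropical fan `F` of dimension `d` is irreducible at the cone `η`: every integer
weight on the facets of the star of `η` satisfying the balancing condition at every
codimension-one cone of the star of `η` is constant. -/
def IrreducibleAt {n : ℕ} (F : Finset (Set (V n))) (d : ℕ) (η : Set (V n)) : Prop :=
  ∀ w : Set (V n) → ℤ,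
    (∀ τ ∈ F, dimC τ = d - 1 → η ⊆ τ →
      ∀ u : Set (V n) → Fin n → ℤ,
        (∀ σ ∈ facets F d τ, IsNormalVector σ τ (u σ)) →
        memLat τ (∑ σ ∈ facets F d τ, w σ • u σ)) →
    ∀ σ ∈ facets F d η, ∀ σ' ∈ facets F d η, w σ = w σ'

/-- Connectivity through codimension one of the star of `η`: the graph whose vertices
are the facets containing `η`, two being adjacent when they share a codimension-one
cone containing `η`, is connected. -/
def StarConnected {n : ℕ} (F : Finset (Set (V n))) (d : ℕ) (η : Set (V n)) : Prop :=
  ∀ σ ∈ facets F d η, ∀ σ' ∈ facets F d η,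
    Relation.ReflTransGen (fun a b =>
      a ∈ facets F d η ∧ b ∈ facets F d η ∧
      ∃ τ ∈ F, dimC τ = d - 1 ∧ η ⊆ τ ∧ τ ⊆ a ∧ τ ⊆ b) σ σ'

/-- `intVec` as a `ℤ`-linear map. -/
def intVecL {n : ℕ} : (Fin n → ℤ) →ₗ[ℤ] V n where
  toFun := intVec
  map_add' := intVec_add
  map_smul' := by
    intro z a; funext i; simp [intVec, zsmul_eq_mul]

lemma intVecL_apply {n : ℕ} (v : Fin n → ℤ) : intVecL v = intVec v := rfl

/-- A rational cone is closed under nonnegative scaling. -/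
lemma ratCone_smul_mem {n : ℕ} {σ : Set (V n)} (hσ : IsRationalCone σ)
    {c : ℝ} (hc : 0 ≤ c) {y : V n} (hy : y ∈ σ) : c • y ∈ σ := by
  obtain ⟨S, rfl⟩ := hσ
  obtain ⟨lam, hlam, rfl⟩ := hy
  exact ⟨fun v => c * lam v, fun v => mul_nonneg hc (hlam v),
    by rw [Finset.smul_sum]; exact Finset.sum_congr rfl fun v _ => (mul_smul c (lam v) _).symm⟩

/-- Generators of a rational cone belong to it. -/
lemma ratCone_gen_mem {n : ℕ} {S : Finset (Fin n → ℤ)} {t : Fin n → ℤ} (ht : t ∈ S) :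
    intVec t ∈ {x : V n | ∃ lam : (Fin n → ℤ) → ℝ, (∀ v, 0 ≤ lam v) ∧
      x = ∑ v ∈ S, lam v • intVec v} := by
  classical
  refine ⟨fun v => if v = t then 1 else 0, fun v => by positivity, ?_⟩
  simp only [ite_smul, one_smul, zero_smul]
  rw [Finset.sum_ite_eq' S t intVec, if_pos ht]

/-- L1: the span of a rational cone is the span of finitely many integer vectors
lying in the cone. -/
lemma span_ratCone {n : ℕ} {σ : Set (V n)} (hσ : IsRationalCone σ) :
    ∃ T : Finset (Fin n → ℤ), Submodule.span ℝ σ = Submodule.span ℝ (intVec '' ↑T) ∧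
      ∀ t ∈ T, intVec t ∈ σ := by
  classical
  obtain ⟨S, hS⟩ := hσ
  refine ⟨S, le_antisymm ?_ ?_, fun t ht => hS ▸ ratCone_gen_mem ht⟩
  · rw [Submodule.span_le]
    rintro x hx
    rw [hS] at hx
    obtain ⟨lam, hlam, rfl⟩ := hx
    exact Submodule.sum_mem _ fun v hv => Submodule.smul_mem _ _
      (Submodule.subset_span ⟨v, by simpa using hv, rfl⟩)
  · rw [Submodule.span_le]
    rintro x ⟨t, ht, rfl⟩
    exact Submodule.subset_span (hS ▸ ratCone_gen_mem (by simpa using ht))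
/-- A cone of a fan which contains a cone of the same dimension equals it. -/
lemma face_eq_of_dim_eq {n : ℕ} {F : Finset (Set (V n))} (hFan : IsFan F)
    {τ σ : Set (V n)} (hτ : τ ∈ F) (hσ : σ ∈ F) (hsub : τ ⊆ σ)
    (hdim : dimC τ = dimC σ) : τ = σ := by
  have hface : IsFaceOf (σ ∩ τ) σ := hFan.inter_face_left σ hσ τ hτ
  rw [Set.inter_eq_self_of_subset_right hsub] at hface
  obtain ⟨ℓ, hpos, hτeq⟩ := hface
  have hspan : Submodule.span ℝ τ = Submodule.span ℝ σ :=
    Submodule.eq_of_le_of_finrank_le (Submodule.span_mono hsub) (le_of_eq hdim.symm)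
  have hker : Submodule.span ℝ τ ≤ LinearMap.ker ℓ := by
    rw [Submodule.span_le]; intro x hx
    simpa [LinearMap.mem_ker] using (hτeq ▸ hx).2
  refine Set.Subset.antisymm hsub fun x hx => ?_
  have : ℓ x = 0 := hker (hspan ▸ Submodule.subset_span hx)
  rw [hτeq]; exact ⟨hx, this⟩

/-- Face data for a codimension-one inclusion of cones of a fan. -/
lemma face_data {n : ℕ} {F : Finset (Set (V n))} (hFan : IsFan F)
    {τ σ : Set (V n)} (hτ : τ ∈ F) (hσ : σ ∈ F) (hsub : τ ⊆ σ)
    (hdim : dimC σ = dimC τ + 1) :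
    ∃ ℓ : (V n) →ₗ[ℝ] ℝ, (∀ x ∈ σ, 0 ≤ ℓ x) ∧ τ = σ ∩ {x | ℓ x = 0} ∧
      Submodule.span ℝ σ ⊓ LinearMap.ker ℓ = Submodule.span ℝ τ ∧
      ∃ y ∈ σ, 0 < ℓ y := by
  have hface : IsFaceOf (σ ∩ τ) σ := hFan.inter_face_left σ hσ τ hτ
  rw [Set.inter_eq_self_of_subset_right hsub] at hface
  obtain ⟨ℓ, hpos, hτeq⟩ := hface
  have hy : ∃ y ∈ σ, 0 < ℓ y := by
    by_contra hcon
    push_neg at hcon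
    have hστ : σ ⊆ τ := fun x hx => by
      rw [hτeq]; exact ⟨hx, le_antisymm (hcon x hx) (hpos x hx)⟩
    have : τ = σ := Set.Subset.antisymm hsub hστ
    rw [this] at hdim; omega
  obtain ⟨y, hyσ, hy0⟩ := hy
  refine ⟨ℓ, hpos, hτeq, ?_, y, hyσ, hy0⟩
  have hle : Submodule.span ℝ τ ≤ Submodule.span ℝ σ ⊓ LinearMap.ker ℓ := by
    refine le_inf (Submodule.span_mono hsub) ?_
    rw [Submodule.span_le]; intro x hx
    simpa [LinearMap.mem_ker] using (hτeq ▸ hx).2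
  have hlt : Submodule.span ℝ σ ⊓ LinearMap.ker ℓ < Submodule.span ℝ σ := by
    refine lt_of_le_of_ne inf_le_left fun h => ?_
    have hymem : y ∈ Submodule.span ℝ σ ⊓ LinearMap.ker ℓ := by
      rw [h]; exact Submodule.subset_span hyσ
    exact absurd (LinearMap.mem_ker.mp hymem.2) (ne_of_gt hy0)
  have hfr : Module.finrank ℝ ↥(Submodule.span ℝ σ ⊓ LinearMap.ker ℓ) ≤ dimC τ := by
    have := Submodule.finrank_lt_finrank_of_lt hlt
    unfold dimC at hdim ⊢; omega
  exact (Submodule.eq_of_le_of_finrank_le hle hfr).symm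
/-- The linear functional on `ι → ℝ` given by a rational row. -/
def rowFun {ι : Type} [Fintype ι] (r : ι → ℚ) : (ι → ℝ) →ₗ[ℝ] ℝ :=
  ∑ i, (r i : ℝ) • LinearMap.proj i

lemma rowFun_apply {ι : Type} [Fintype ι] (r : ι → ℚ) (x : ι → ℝ) :
    rowFun r x = ∑ i, (r i : ℝ) * x i := by
  simp [rowFun]

/-- Rational solutions of a rational linear system span its real solutions. -/
lemma rat_solutions_span {ι : Type} [Fintype ι] [DecidableEq ι] (rows : List (ι → ℚ))
    (x : ι → ℝ) (hx : ∀ r ∈ rows, ∑ i, (r i : ℝ) * x i = 0) :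
    x ∈ Submodule.span ℝ {y : ι → ℝ | ∃ q : ι → ℚ,
      (∀ r ∈ rows, ∑ i, r i * q i = 0) ∧ y = fun i => (q i : ℝ)} := by
  induction rows with
  | nil =>
    have hxe : x = ∑ i, x i • fun j => if i = j then (1:ℝ) else 0 := pi_eq_sum_univ x
    rw [hxe]
    refine Submodule.sum_mem _ fun i _ => Submodule.smul_mem _ _ (Submodule.subset_span ?_)
    refine ⟨fun j => if i = j then 1 else 0, by simp, ?_⟩
    funext j; by_cases h : i = j <;> simp [h]
  | cons r rest ih =>
    have hr : ∑ i, (r i : ℝ) * x i = 0 := hx r List.mem_cons_self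
    have hrest := fun r' hr' => hx r' (List.mem_cons_of_mem _ hr')
    have hxin := ih hrest
    by_cases hc : ∀ q : ι → ℚ, (∀ r' ∈ rest, ∑ i, r' i * q i = 0) → ∑ i, r i * q i = 0
    · refine Submodule.span_mono ?_ hxin
      rintro y ⟨q, hq, rfl⟩
      refine ⟨q, fun r' hr' => ?_, rfl⟩
      rcases List.mem_cons.mp hr' with h | h
      · subst h; exact hc q hq
      · exact hq r' h
    · push_neg at hc
      obtain ⟨e, he, hSe0⟩ := hc
      set Se : ℚ := ∑ i, r i * e i with hSedef
      set Φ : (ι → ℝ) →ₗ[ℝ] (ι → ℝ) :=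
        LinearMap.id - (rowFun r).smulRight ((Se : ℝ)⁻¹ • fun i => (e i : ℝ)) with hΦ
      have hΦx : Φ x = x := by
        simp [hΦ, LinearMap.sub_apply, LinearMap.smulRight_apply, rowFun_apply, hr]
      have hmap : ∀ y ∈ {y : ι → ℝ | ∃ q : ι → ℚ,
            (∀ r' ∈ rest, ∑ i, r' i * q i = 0) ∧ y = fun i => (q i : ℝ)},
          Φ y ∈ Submodule.span ℝ {y : ι → ℝ | ∃ q : ι → ℚ,
            (∀ r' ∈ r :: rest, ∑ i, r' i * q i = 0) ∧ y = fun i => (q i : ℝ)} := by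
        rintro y ⟨q, hq, rfl⟩
        set Sq : ℚ := ∑ i, r i * q i with hSqdef
        refine Submodule.subset_span ⟨fun i => q i - (Sq / Se) * e i, fun r' hr' => ?_, ?_⟩
        · have expand : ∑ i, r' i * (q i - Sq / Se * e i)
              = (∑ i, r' i * q i) - (Sq / Se) * ∑ i, r' i * e i := by
            rw [Finset.mul_sum, ← Finset.sum_sub_distrib]
            exact Finset.sum_congr rfl fun i _ => by ring
          rcases List.mem_cons.mp hr' with h | h
          · subst h
            rw [expand, ← hSqdef, ← hSedef, div_mul_cancel₀ _ hSe0, sub_self]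
          · rw [expand, hq r' h, he r' h]; ring
        · funext i
          simp only [hΦ, LinearMap.sub_apply, LinearMap.id_apply,
            LinearMap.smulRight_apply, rowFun_apply, Pi.sub_apply, Pi.smul_apply,
            smul_eq_mul]
          push_cast [hSqdef, hSedef]
          ring
      have hx2 : Φ x ∈ Submodule.map Φ (Submodule.span ℝ {y : ι → ℝ | ∃ q : ι → ℚ,
          (∀ r' ∈ rest, ∑ i, r' i * q i = 0) ∧ y = fun i => (q i : ℝ)}) :=
        Submodule.mem_map_of_mem hxin
      rw [Submodule.map_span] at hx2
      rw [← hΦx]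
      refine Submodule.span_le.mpr ?_ hx2
      rintro _ ⟨y, hy, rfl⟩
      exact hmap y hy
lemma exists_common_den {ι : Type} [Fintype ι] (q : ι → ℚ) :
    ∃ N : ℤ, 0 < N ∧ ∀ i, ∃ z : ℤ, (z : ℚ) = N * q i := by
  classical
  refine ⟨∏ i, ((q i).den : ℤ), Finset.prod_pos fun i _ => by exact_mod_cast (q i).pos, ?_⟩
  intro i
  obtain ⟨k, hk⟩ : ((q i).den : ℤ) ∣ ∏ j, ((q j).den : ℤ) :=
    Finset.dvd_prod_of_mem _ (Finset.mem_univ i)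
  have h0 : ((q i).den : ℚ) ≠ 0 := by exact_mod_cast (q i).den_ne_zero
  have hden : q i * ((q i).den : ℚ) = (q i).num :=
    (eq_div_iff h0).mp (Rat.num_div_den (q i)).symm
  have hkQ : (∏ j, ((q j).den : ℚ)) = ((q i).den : ℚ) * (k : ℚ) := by
    exact_mod_cast hk
  refine ⟨(q i).num * k, ?_⟩
  push_cast
  linear_combination (-(k : ℚ)) * hden - q i * hkQ

/-- A rational (integer) vector in the real span of integer vectors is a rational
combination of them. -/
lemma rat_mem_span_int {n : ℕ} {T : Finset (Fin n → ℤ)} {x : Fin n → ℤ}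
    (hx : intVec x ∈ Submodule.span ℝ (intVec '' ↑T)) :
    ∃ c : (Fin n → ℤ) → ℚ, ∀ j, (x j : ℚ) = ∑ t ∈ T, c t * (t j : ℚ) := by
  classical
  have himg : (intVec '' ↑T : Set (V n)) = Set.range fun t : {t // t ∈ T} => intVec t.1 :=
    Set.image_eq_range _ _
  rw [himg] at hx
  obtain ⟨b, hb⟩ := (Submodule.mem_span_range_iff_exists_fun ℝ).mp hx
  set rows : List (Option {t // t ∈ T} → ℚ) := (List.finRange n).map (fun j =>
    fun i => Option.elim i (-(x j : ℚ)) (fun t => (t.1 j : ℚ))) with hrows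
  set X : Option {t // t ∈ T} → ℝ := fun i => Option.elim i 1 (fun t => b t) with hX
  have hXsol : ∀ r ∈ rows, ∑ i, (r i : ℝ) * X i = 0 := by
    intro r hr
    rw [hrows, List.mem_map] at hr
    obtain ⟨j, _, rfl⟩ := hr
    rw [Fintype.sum_option]
    have hbj := congrFun hb j
    simp only [Finset.sum_apply, Pi.smul_apply, smul_eq_mul, intVec] at hbj
    simp only [hX, Option.elim]
    push_cast
    rw [show ∑ t : {t // t ∈ T}, (t.1 j : ℝ) * b t = ∑ t : {t // t ∈ T}, b t * (t.1 j : ℝ)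
      from Finset.sum_congr rfl fun _ _ => mul_comm _ _, hbj]
    ring
  have hXmem := rat_solutions_span rows X hXsol
  have hnone : ∃ q : Option {t // t ∈ T} → ℚ,
      (∀ r ∈ rows, ∑ i, r i * q i = 0) ∧ q none ≠ 0 := by
    by_contra hcon
    push_neg at hcon
    have hle : Submodule.span ℝ {y : Option {t // t ∈ T} → ℝ | ∃ q : Option {t // t ∈ T} → ℚ,
        (∀ r ∈ rows, ∑ i, r i * q i = 0) ∧ y = fun i => (q i : ℝ)} ≤
        LinearMap.ker (LinearMap.proj (R := ℝ) (φ := fun _ : Option {t // t ∈ T} => ℝ) none) := by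
      rw [Submodule.span_le]
      rintro y ⟨q, hq, rfl⟩
      simp [LinearMap.mem_ker, hcon q hq]
    have := hle hXmem
    simp [LinearMap.mem_ker, hX] at this
  obtain ⟨q, hq, hq0⟩ := hnone
  set q' : Option {t // t ∈ T} → ℚ := fun i => q i / q none with hq'
  have hq'sol : ∀ r ∈ rows, ∑ i, r i * q' i = 0 := by
    intro r hr
    rw [hq']
    have : ∑ i, r i * (q i / q none) = (∑ i, r i * q i) / q none := by
      rw [Finset.sum_div]; exact Finset.sum_congr rfl fun i _ => by ring
    rw [this, hq r hr, zero_div]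
  refine ⟨fun t => if h : t ∈ T then q' (some ⟨t, h⟩) else 0, fun j => ?_⟩
  have hrow : (fun i => Option.elim i (-(x j : ℚ)) (fun t : {t // t ∈ T} => (t.1 j : ℚ))) ∈ rows := by
    rw [hrows, List.mem_map]
    exact ⟨j, List.mem_finRange j, rfl⟩
  have := hq'sol _ hrow
  rw [Fintype.sum_option] at this
  simp only [Option.elim] at this
  have hnone1 : q' none = 1 := div_self hq0
  rw [hnone1, mul_one] at this
  rw [← Finset.sum_coe_sort T (fun t => (if h : t ∈ T then q' (some ⟨t, h⟩) else 0) * (t j : ℚ))]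
  have : (x j : ℚ) = ∑ t : {t // t ∈ T}, (t.1 j : ℚ) * q' (some t) := by linarith
  rw [this]
  refine Finset.sum_congr rfl fun t _ => ?_
  rw [dif_pos t.2, mul_comm]
lemma intVec_sub {n : ℕ} (a b : Fin n → ℤ) : intVec (a - b) = intVec a - intVec b := by
  funext i; simp [intVec]

lemma intVec_zsmul {n : ℕ} (k : ℤ) (w : Fin n → ℤ) :
    intVec (k • w) = (k : ℝ) • intVec w := by
  funext i; simp [intVec]

lemma memLat_zsmul {n : ℕ} {τ : Set (V n)} {w : Fin n → ℤ} (k : ℤ) (h : memLat τ w) :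
    memLat τ (k • w) := by
  unfold memLat at *
  rw [intVec_zsmul]
  exact Submodule.smul_mem _ _ h

lemma memLat_add {n : ℕ} {τ : Set (V n)} {a b : Fin n → ℤ} (ha : memLat τ a)
    (hb : memLat τ b) : memLat τ (a + b) := by
  unfold memLat at *
  rw [intVec_add]; exact Submodule.add_mem _ ha hb

lemma span_le_ker {n : ℕ} {σ τ : Set (V n)} {ℓ : V n →ₗ[ℝ] ℝ}
    (hτeq : τ = σ ∩ {x | ℓ x = 0}) : Submodule.span ℝ τ ≤ LinearMap.ker ℓ :=
  Submodule.span_le.mpr fun x hx => LinearMap.mem_ker.mpr (hτeq ▸ hx).2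

/-- In a codimension-one inclusion, there is a lattice point of `σ`'s span not in
`τ`'s span. -/
lemma exists_not_in_subspan {n : ℕ} {F : Finset (Set (V n))} (hFan : IsFan F)
    {τ σ : Set (V n)} (hτ : τ ∈ F) (hσ : σ ∈ F) (hsub : τ ⊆ σ)
    (hdim : dimC σ = dimC τ + 1) :
    ∃ s : Fin n → ℤ, memLat σ s ∧ ¬ memLat τ s := by
  obtain ⟨T, hTspan, hTmem⟩ := span_ratCone (hFan.rat σ hσ)
  by_contra hcon
  push_neg at hcon
  have hle : Submodule.span ℝ σ ≤ Submodule.span ℝ τ := by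
    rw [hTspan, Submodule.span_le]
    rintro x ⟨t, ht, rfl⟩
    exact hcon t (Submodule.subset_span (hTmem t (by simpa using ht)))
  have := Submodule.finrank_mono hle
  unfold dimC at hdim
  omega

/-- The defining linear form is positive on any normal vector. -/
lemma normal_pos {n : ℕ} {σ τ : Set (V n)} {ℓ : V n →ₗ[ℝ] ℝ}
    (hpos : ∀ x ∈ σ, 0 ≤ ℓ x) (hτeq : τ = σ ∩ {x | ℓ x = 0})
    (hinf : Submodule.span ℝ σ ⊓ LinearMap.ker ℓ = Submodule.span ℝ τ)
    {sstar : Fin n → ℤ} (hs1 : memLat σ sstar) (hs2 : ¬ memLat τ sstar)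
    {w : Fin n → ℤ} (hw : IsNormalVector σ τ w) : 0 < ℓ (intVec w) := by
  obtain ⟨hw1, ⟨y, hyσ, z, hz, hwyz⟩, hw3⟩ := hw
  have hz0 : ℓ z = 0 := LinearMap.mem_ker.mp (span_le_ker hτeq hz)
  have hly : ℓ (intVec w) = ℓ y := by rw [hwyz, map_add, hz0, add_zero]
  rcases lt_or_eq_of_le (hpos y hyσ) with h | h
  · rwa [hly]
  · exfalso
    have hwτ : memLat τ w := by
      have : intVec w ∈ Submodule.span ℝ σ ⊓ LinearMap.ker ℓ :=
        ⟨hw1, LinearMap.mem_ker.mpr (by rw [hly, ← h])⟩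
      rw [hinf] at this; exact this
    obtain ⟨u0, k, hu0, hseq⟩ := (hw3 sstar).mp hs1
    exact hs2 (hseq ▸ memLat_add hu0 (memLat_zsmul k hwτ))

/-- Two normal vectors for the same pair differ by a lattice element of `τ`. -/
lemma normal_sub_mem {n : ℕ} {F : Finset (Set (V n))} (hFan : IsFan F)
    {τ σ : Set (V n)} (hτ : τ ∈ F) (hσ : σ ∈ F) (hsub : τ ⊆ σ)
    (hdim : dimC σ = dimC τ + 1) {u v : Fin n → ℤ}
    (hu : IsNormalVector σ τ u) (hv : IsNormalVector σ τ v) : memLat τ (u - v) := by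
  obtain ⟨ℓ, hpos, hτeq, hinf, y, hyσ, hy0⟩ := face_data hFan hτ hσ hsub hdim
  obtain ⟨sstar, hs1, hs2⟩ := exists_not_in_subspan hFan hτ hσ hsub hdim
  have hlu : 0 < ℓ (intVec u) := normal_pos hpos hτeq hinf hs1 hs2 hu
  have hlv : 0 < ℓ (intVec v) := normal_pos hpos hτeq hinf hs1 hs2 hv
  obtain ⟨u1, k, hu1, hueq⟩ := (hv.2.2 u).mp hu.1
  obtain ⟨u2, k', hu2, hveq⟩ := (hu.2.2 v).mp hv.1
  have hlu1 : ℓ (intVec u1) = 0 := LinearMap.mem_ker.mp (span_le_ker hτeq hu1)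
  have hlu2 : ℓ (intVec u2) = 0 := LinearMap.mem_ker.mp (span_le_ker hτeq hu2)
  have heq1 : ℓ (intVec u) = (k : ℝ) * ℓ (intVec v) := by
    rw [hueq, intVec_add, intVec_zsmul, map_add, hlu1, map_smul, zero_add, smul_eq_mul]
  have heq2 : ℓ (intVec v) = (k' : ℝ) * ℓ (intVec u) := by
    rw [hveq, intVec_add, intVec_zsmul, map_add, hlu2, map_smul, zero_add, smul_eq_mul]
  have hkk' : k' * k = 1 := by
    have : ℓ (intVec v) = (k' : ℝ) * ((k : ℝ) * ℓ (intVec v)) := by rw [← heq1, ← heq2]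
    have h2 : ((k' * k : ℤ) : ℝ) = 1 := by
      push_cast
      have hne : ℓ (intVec v) ≠ 0 := hlv.ne'
      apply mul_right_cancel₀ hne
      linear_combination this.symm
    exact_mod_cast h2
  have hk1 : k = 1 := by
    rcases Int.eq_one_or_neg_one_of_mul_eq_one' hkk' with ⟨_, h⟩ | ⟨_, h⟩
    · exact h
    · exfalso; rw [h] at heq1; push_cast at heq1; nlinarith
  have : u - v = u1 := by rw [hueq, hk1, one_smul]; abel
  rw [this]; exact hu1
/-- Existence of a normal vector for a codimension-one inclusion in a fan. -/
lemma exists_normal_vector {n : ℕ} {F : Finset (Set (V n))} (hFan : IsFan F)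
    {τ σ : Set (V n)} (hτ : τ ∈ F) (hσ : σ ∈ F) (hsub : τ ⊆ σ)
    (hdim : dimC σ = dimC τ + 1) : ∃ v : Fin n → ℤ, IsNormalVector σ τ v := by
  classical
  obtain ⟨ℓ, hpos, hτeq, hinf, y, hyσ, hy0⟩ := face_data hFan hτ hσ hsub hdim
  obtain ⟨T, hTspan, hTmem⟩ := span_ratCone (hFan.rat τ hτ)
  obtain ⟨sstar, hs1, hs2⟩ := exists_not_in_subspan hFan hτ hσ hsub hdim
  have hker : Submodule.span ℝ τ ≤ LinearMap.ker ℓ := span_le_ker hτeq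
  have hls : ℓ (intVec sstar) ≠ 0 := by
    intro h
    refine hs2 ?_
    have : intVec sstar ∈ Submodule.span ℝ σ ⊓ LinearMap.ker ℓ := ⟨hs1, h⟩
    rw [hinf] at this; exact this
  set Nσ : Submodule ℤ (Fin n → ℤ) :=
    Submodule.comap intVecL ((Submodule.span ℝ σ).restrictScalars ℤ) with hNσ
  have hmemNσ : ∀ w : Fin n → ℤ, w ∈ Nσ ↔ memLat σ w := fun w => Iff.rfl
  obtain ⟨G, hG⟩ := IsNoetherian.noetherian Nσ
  -- each generator has ℓ-value a rational multiple of ℓ(sstar)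
  have key : ∀ g : Fin n → ℤ, g ∈ Nσ →
      ∃ cg : ℚ, ℓ (intVec g) = (cg : ℝ) * ℓ (intVec sstar) := by
    intro g hg
    have hgσ : intVec g ∈ Submodule.span ℝ σ := hg
    set c0 : ℝ := ℓ (intVec g) / ℓ (intVec sstar) with hc0
    have hdiff : intVec g - c0 • intVec sstar ∈ Submodule.span ℝ τ := by
      rw [← hinf]
      refine ⟨Submodule.sub_mem _ hgσ (Submodule.smul_mem _ _ hs1), ?_⟩
      simp only [SetLike.mem_coe, LinearMap.mem_ker, map_sub, map_smul, smul_eq_mul, hc0]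
      rw [div_mul_cancel₀ _ hls, sub_self]
    have hsT : sstar ∉ T := by
      intro h
      refine hs2 ?_
      unfold memLat
      rw [hTspan]
      exact Submodule.subset_span ⟨sstar, by simpa using h, rfl⟩
    have hgmem : intVec g ∈ Submodule.span ℝ (intVec '' ↑(insert sstar T)) := by
      have h1 : intVec g - c0 • intVec sstar ∈
          Submodule.span ℝ (intVec '' ↑(insert sstar T)) := by
        refine Submodule.span_mono (Set.image_mono ?_) (hTspan ▸ hdiff)
        intro t ht; simp [Finset.mem_insert]; tauto
      have h2 : intVec sstar ∈ Submodule.span ℝ (intVec '' ↑(insert sstar T)) :=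
        Submodule.subset_span ⟨sstar, by simp, rfl⟩
      have := Submodule.add_mem _ h1 (Submodule.smul_mem _ c0 h2)
      simpa using this
    obtain ⟨c, hc⟩ := rat_mem_span_int hgmem
    refine ⟨c sstar, ?_⟩
    have hrest : intVec g - (c sstar : ℝ) • intVec sstar ∈ Submodule.span ℝ τ := by
      have hvec : intVec g - (c sstar : ℝ) • intVec sstar
          = ∑ t ∈ T, (c t : ℝ) • intVec t := by
        funext j
        have := hc j
        rw [Finset.sum_insert hsT] at this
        simp only [Pi.sub_apply, Pi.smul_apply, smul_eq_mul, Finset.sum_apply, intVec]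
        have h2 : ((g j : ℚ) : ℝ) = ((c sstar * (sstar j : ℚ) + ∑ t ∈ T, c t * (t j : ℚ) : ℚ) : ℝ) :=
          congrArg (fun x : ℚ => (x : ℝ)) this
        push_cast at h2 ⊢
        linarith [h2]
      rw [hvec, hTspan]
      exact Submodule.sum_mem _ fun t ht =>
        Submodule.smul_mem _ _ (Submodule.subset_span ⟨t, by simpa using ht, rfl⟩)
    have h0 : ℓ (intVec g - (c sstar : ℝ) • intVec sstar) = 0 :=
      LinearMap.mem_ker.mp (hker hrest)
    rw [map_sub, map_smul, smul_eq_mul, sub_eq_zero] at h0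
    exact h0
  -- common denominator
  have hGsub : ∀ g : {g // g ∈ G}, (g : Fin n → ℤ) ∈ Nσ := fun g =>
    hG ▸ Submodule.subset_span g.2
  choose cg hcg using fun g : {g // g ∈ G} => key g (hGsub g)
  obtain ⟨N, hN, hNden⟩ := exists_common_den cg
  set β : ℝ := ℓ (intVec sstar) / N with hβ
  have hN0 : (N : ℝ) ≠ 0 := by exact_mod_cast ne_of_gt hN
  have hβ0 : β ≠ 0 := div_ne_zero hls hN0
  have star : ∀ w : Fin n → ℤ, w ∈ Nσ → ∃ k : ℤ, ℓ (intVec w) = (k : ℝ) * β := by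
    intro w hw
    rw [← hG] at hw
    induction hw using Submodule.span_induction with
    | mem g hgG =>
      obtain ⟨z, hz⟩ := hNden ⟨g, hgG⟩
      refine ⟨z, ?_⟩
      have hzR : (z : ℝ) = (N : ℝ) * (cg ⟨g, hgG⟩ : ℝ) := by exact_mod_cast hz
      rw [hcg ⟨g, hgG⟩, hzR, hβ]
      field_simp
    | zero => exact ⟨0, by rw [intVec_zero, map_zero]; push_cast; ring⟩
    | add a b _ _ iha ihb =>
      obtain ⟨k1, h1⟩ := iha
      obtain ⟨k2, h2⟩ := ihb
      exact ⟨k1 + k2, by rw [intVec_add, map_add, h1, h2]; push_cast; ring⟩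
    | smul m a _ iha =>
      obtain ⟨k1, h1⟩ := iha
      exact ⟨m * k1, by rw [intVec_zsmul, map_smul, smul_eq_mul, h1]; push_cast; ring⟩
  set A : Submodule ℤ ℤ :=
    { carrier := {k : ℤ | ∃ w, w ∈ Nσ ∧ ℓ (intVec w) = (k : ℝ) * β}
      add_mem' := by
        rintro a b ⟨w1, hw1, h1⟩ ⟨w2, hw2, h2⟩
        exact ⟨w1 + w2, Submodule.add_mem _ hw1 hw2,
          by rw [intVec_add, map_add, h1, h2]; push_cast; ring⟩
      zero_mem' := ⟨0, Submodule.zero_mem _, by rw [intVec_zero, map_zero]; push_cast; ring⟩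
      smul_mem' := by
        rintro m k ⟨w, hw, h⟩
        exact ⟨m • w, Submodule.smul_mem _ _ hw,
          by rw [intVec_zsmul, map_smul, smul_eq_mul, h, smul_eq_mul]; push_cast; ring⟩ }
    with hA
  have hAmem : ∀ k : ℤ, k ∈ A ↔ ∃ w, w ∈ Nσ ∧ ℓ (intVec w) = (k : ℝ) * β :=
    fun k => Iff.rfl
  have hAP : A.IsPrincipal := IsPrincipalIdealRing.principal A
  set a0 : ℤ := Submodule.IsPrincipal.generator A with ha0
  have hNA : N ∈ A := ⟨sstar, (hmemNσ sstar).mpr hs1, by rw [hβ, mul_div_cancel₀ _ hN0]⟩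
  have ha00 : a0 ≠ 0 := by
    intro h
    obtain ⟨m, hm⟩ := (Submodule.IsPrincipal.mem_iff_eq_smul_generator A).mp hNA
    rw [← ha0, h, smul_eq_mul, mul_zero] at hm
    omega
  obtain ⟨w0, hw0N, hw0⟩ := (hAmem a0).mp (Submodule.IsPrincipal.generator_mem A)
  have hlw0 : ℓ (intVec w0) ≠ 0 := by
    rw [hw0]
    exact mul_ne_zero (by exact_mod_cast ha00) hβ0
  set v : Fin n → ℤ := if 0 < ℓ (intVec w0) then w0 else -w0 with hvdef
  have hvN : v ∈ Nσ := by
    rw [hvdef]; split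
    · exact hw0N
    · exact Submodule.neg_mem _ hw0N
  have hvσ : memLat σ v := (hmemNσ v).mp hvN
  have hlv : 0 < ℓ (intVec v) := by
    rw [hvdef]; split
    · assumption
    · rw [intVec_neg, map_neg]
      rcases lt_trichotomy (ℓ (intVec w0)) 0 with h | h | h
      · linarith
      · exact absurd h hlw0
      · tauto
  have key2 : ∀ w : Fin n → ℤ, w ∈ Nσ → ∃ k : ℤ, memLat τ (w - k • v) := by
    intro w hw
    obtain ⟨k1, hk1⟩ := star w hw
    obtain ⟨m, hm⟩ := (Submodule.IsPrincipal.mem_iff_eq_smul_generator A).mp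
      ((hAmem k1).mpr ⟨w, hw, hk1⟩)
    rw [← ha0, smul_eq_mul] at hm
    have hcases : ∃ k : ℤ, ℓ (intVec w) = (k : ℝ) * ℓ (intVec v) := by
      rw [hvdef]; split
      · exact ⟨m, by rw [hk1, hm, hw0]; push_cast; ring⟩
      · refine ⟨-m, ?_⟩
        rw [intVec_neg, map_neg, hk1, hm, hw0]; push_cast; ring
    obtain ⟨k, hk⟩ := hcases
    refine ⟨k, ?_⟩
    have hmem : intVec (w - k • v) ∈ Submodule.span ℝ σ ⊓ LinearMap.ker ℓ := by
      constructor
      · rw [intVec_sub, intVec_zsmul]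
        exact Submodule.sub_mem _ hw (Submodule.smul_mem _ _ hvN)
      · rw [SetLike.mem_coe, LinearMap.mem_ker, intVec_sub, intVec_zsmul, map_sub, map_smul,
          smul_eq_mul, hk, sub_self]
    rw [hinf] at hmem
    exact hmem
  -- assemble the normal vector
  refine ⟨v, hvσ, ?_, ?_⟩
  · -- v ∈ σ + span τ
    set c : ℝ := ℓ (intVec v) / ℓ y with hc
    have hc0 : 0 ≤ c := le_of_lt (div_pos hlv hy0)
    refine ⟨c • y, ratCone_smul_mem (hFan.rat σ hσ) hc0 hyσ, intVec v - c • y, ?_, by abel⟩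
    have : intVec v - c • y ∈ Submodule.span ℝ σ ⊓ LinearMap.ker ℓ := by
      constructor
      · exact Submodule.sub_mem _ hvN (Submodule.smul_mem _ _ (Submodule.subset_span hyσ))
      · rw [SetLike.mem_coe, LinearMap.mem_ker, map_sub, map_smul, smul_eq_mul, hc,
          div_mul_cancel₀ _ (ne_of_gt hy0), sub_self]
    rw [hinf] at this
    exact this
  · intro w
    constructor
    · intro hw
      obtain ⟨k, hk⟩ := key2 w ((hmemNσ w).mpr hw)
      exact ⟨w - k • v, k, hk, by rw [sub_add_cancel]⟩
    · rintro ⟨u, k, hu, rfl⟩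
      have huσ : intVec u ∈ Submodule.span ℝ σ := Submodule.span_mono hsub hu
      unfold memLat
      rw [intVec_add, intVec_zsmul]
      exact Submodule.add_mem _ huσ (Submodule.smul_mem _ _ hvN)
lemma facets_mem {n d : ℕ} {F : Finset (Set (V n))} {τ σ : Set (V n)}
    (h : σ ∈ facets F d τ) : σ ∈ F ∧ dimC σ = d ∧ τ ⊆ σ := by
  simpa [facets, Finset.mem_filter] using h

lemma mem_facets_iff {n d : ℕ} {F : Finset (Set (V n))} {τ σ : Set (V n)} :
    σ ∈ facets F d τ ↔ σ ∈ F ∧ dimC σ = d ∧ τ ⊆ σ := by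
  simp [facets, Finset.mem_filter]

lemma memLat_sum {n : ℕ} {τ : Set (V n)} {α : Type*} {s : Finset α} {f : α → Fin n → ℤ}
    (h : ∀ a ∈ s, memLat τ (f a)) : memLat τ (∑ a ∈ s, f a) := by
  unfold memLat at *
  rw [← intVecL_apply, map_sum]
  exact Submodule.sum_mem _ fun a ha => h a ha

/-- Reverse direction: normal + star-connected implies locally irreducible. -/
lemma bwd_irr {n d : ℕ} {F : Finset (Set (V n))} (hF : IsTropicalFan F d)
    (hnorm : IsNormalTropicalFan F d) (hconn : ∀ η ∈ F, StarConnected F d η) :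
    ∀ η ∈ F, IrreducibleAt F d η := by
  intro η hη w hw σ hσ σ' hσ'
  have hedge : ∀ a b : Set (V n), (a ∈ facets F d η ∧ b ∈ facets F d η ∧
      ∃ τ ∈ F, dimC τ = d - 1 ∧ η ⊆ τ ∧ τ ⊆ a ∧ τ ⊆ b) → w a = w b := by
    rintro a b ⟨ha, hb, τ, hτF, hτd, hητ, hτa, hτb⟩
    obtain ⟨haF, had, -⟩ := facets_mem ha
    obtain ⟨hbF, hbd, -⟩ := facets_mem hb
    have haf : a ∈ facets F d τ := mem_facets_iff.mpr ⟨haF, had, hτa⟩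
    have hbf : b ∈ facets F d τ := mem_facets_iff.mpr ⟨hbF, hbd, hτb⟩
    rcases Nat.eq_zero_or_pos d with hd0 | hdpos
    · have h1 : τ = a := face_eq_of_dim_eq hF.1 hτF haF hτa (by omega)
      have h2 : τ = b := face_eq_of_dim_eq hF.1 hτF hbF hτb (by omega)
      rw [← h1, ← h2]
    · have hex : ∀ σc ∈ facets F d τ, ∃ v : Fin n → ℤ, IsNormalVector σc τ v := by
        intro σc hc
        obtain ⟨hcF, hcd, hcsub⟩ := facets_mem hc
        exact exists_normal_vector hF.1 hτF hcF hcsub (by omega)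
      choose! u hu using hex
      have hbal := hw τ hτF hτd hητ u hu
      have hreal : (∑ σc ∈ facets F d τ, (w σc : ℝ) • intVec (u σc))
          ∈ Submodule.span ℝ τ := by
        have heq : intVec (∑ σc ∈ facets F d τ, w σc • u σc)
            = ∑ σc ∈ facets F d τ, (w σc : ℝ) • intVec (u σc) := by
          rw [← intVecL_apply, map_sum]
          exact Finset.sum_congr rfl fun σc _ => by
            rw [intVecL_apply, intVec_zsmul]
        rw [← heq]
        exact hbal
      have h2 : (w a : ℝ) = (w b : ℝ) := hnorm τ hτF hτd u hu (fun σc => (w σc : ℝ)) hreal a haf b hbf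
      exact_mod_cast h2
  have htrans : ∀ {a b : Set (V n)}, Relation.ReflTransGen (fun a b =>
      a ∈ facets F d η ∧ b ∈ facets F d η ∧
      ∃ τ ∈ F, dimC τ = d - 1 ∧ η ⊆ τ ∧ τ ⊆ a ∧ τ ⊆ b) a b → w a = w b := by
    intro a b h
    induction h with
    | refl => rfl
    | tail _ hlast ih => exact ih.trans (hedge _ _ hlast)
  exact htrans (hconn η hη σ hσ σ' hσ')

/-- Forward direction: local irreducibility implies star-connectedness. -/
lemma fwd_conn {n d : ℕ} {F : Finset (Set (V n))} (hF : IsTropicalFan F d)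
    (hirr : ∀ η ∈ F, IrreducibleAt F d η) : ∀ η ∈ F, StarConnected F d η := by
  intro η hη σ hσ σ' hσ'
  classical
  set rel : Set (V n) → Set (V n) → Prop := fun a b =>
    a ∈ facets F d η ∧ b ∈ facets F d η ∧
    ∃ τ ∈ F, dimC τ = d - 1 ∧ η ⊆ τ ∧ τ ⊆ a ∧ τ ⊆ b with hrel
  set w : Set (V n) → ℤ := fun s => if Relation.ReflTransGen rel σ s then 1 else 0 with hwdef
  have hbal : ∀ τ ∈ F, dimC τ = d - 1 → η ⊆ τ →
      ∀ u : Set (V n) → Fin n → ℤ,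
        (∀ σc ∈ facets F d τ, IsNormalVector σc τ (u σc)) →
        memLat τ (∑ σc ∈ facets F d τ, w σc • u σc) := by
    intro τ hτF hτd hητ u hu
    rcases Finset.eq_empty_or_nonempty (facets F d τ) with he | ⟨σb, hσb⟩
    · rw [he, Finset.sum_empty]
      unfold memLat
      rw [intVec_zero]
      exact Submodule.zero_mem _
    · have hmemη : ∀ σc ∈ facets F d τ, σc ∈ facets F d η := by
        intro σc hc
        obtain ⟨hcF, hcd, hcs⟩ := facets_mem hc
        exact mem_facets_iff.mpr ⟨hcF, hcd, hητ.trans hcs⟩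
      have hconst : ∀ σc ∈ facets F d τ, w σc = w σb := by
        intro σc hc
        have hedge : rel σb σc := ⟨hmemη σb hσb, hmemη σc hc,
          τ, hτF, hτd, hητ, (facets_mem hσb).2.2, (facets_mem hc).2.2⟩
        have hedge' : rel σc σb := ⟨hmemη σc hc, hmemη σb hσb,
          τ, hτF, hτd, hητ, (facets_mem hc).2.2, (facets_mem hσb).2.2⟩
        show (if Relation.ReflTransGen rel σ σc then (1:ℤ) else 0)
            = (if Relation.ReflTransGen rel σ σb then (1:ℤ) else 0)
        by_cases h : Relation.ReflTransGen rel σ σb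
        · rw [if_pos (h.tail hedge), if_pos h]
        · rw [if_neg (fun hc2 => h (hc2.tail hedge')), if_neg h]
      have hsum : ∑ σc ∈ facets F d τ, w σc • u σc
          = w σb • ∑ σc ∈ facets F d τ, u σc := by
        rw [Finset.smul_sum]
        exact Finset.sum_congr rfl fun σc hc => by rw [hconst σc hc]
      rw [hsum]
      exact memLat_zsmul _ (hF.2.2 τ hτF hτd u hu)
  have hcst := hirr η hη w hbal σ' hσ' σ hσ
  by_contra hnot
  have h1 : w σ = 1 := if_pos Relation.ReflTransGen.refl
  have h0 : w σ' = 0 := if_neg hnot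
  rw [h0, h1] at hcst
  exact absurd hcst (by norm_num)
/-- Forward direction: local irreducibility implies normality. -/
lemma fwd_normal {n d : ℕ} {F : Finset (Set (V n))} (hF : IsTropicalFan F d)
    (hirr : ∀ η ∈ F, IrreducibleAt F d η) : IsNormalTropicalFan F d := by
  classical
  intro τ hτF hτd v hv a hmem σ1 hσ1 σ2 hσ2
  rcases Nat.eq_zero_or_pos d with hd0 | hdpos
  · obtain ⟨h1F, h1d, h1s⟩ := facets_mem hσ1
    obtain ⟨h2F, h2d, h2s⟩ := facets_mem hσ2
    have e1 : τ = σ1 := face_eq_of_dim_eq hF.1 hτF h1F h1s (by omega)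
    have e2 : τ = σ2 := face_eq_of_dim_eq hF.1 hτF h2F h2s (by omega)
    rw [← e1, ← e2]
  obtain ⟨T, hTspan, hTmem⟩ := span_ratCone (hF.1.rat τ hτF)
  have hmem' : (∑ σc ∈ facets F d τ, a σc • intVec (v σc)) ∈
      Submodule.span ℝ (Set.range fun t : {t // t ∈ T} => intVec t.1) := by
    have himg : (intVec '' ↑T : Set (V n)) = Set.range fun t : {t // t ∈ T} => intVec t.1 :=
      Set.image_eq_range _ _
    rw [← himg, ← hTspan]
    exact hmem
  obtain ⟨b, hb⟩ := (Submodule.mem_span_range_iff_exists_fun ℝ).mp hmem'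
  set S := facets F d τ with hS
  set rows : List (({σc // σc ∈ S} ⊕ {t // t ∈ T}) → ℚ) := (List.finRange n).map (fun j =>
    fun i => Sum.elim (fun σs : {σc // σc ∈ S} => ((v σs.1) j : ℚ))
      (fun t : {t // t ∈ T} => -(t.1 j : ℚ)) i) with hrows
  set X : ({σc // σc ∈ S} ⊕ {t // t ∈ T}) → ℝ :=
    Sum.elim (fun σs => a σs.1) (fun t => b t) with hX
  have hXsol : ∀ r ∈ rows, ∑ i, (r i : ℝ) * X i = 0 := by
    intro r hr
    rw [hrows, List.mem_map] at hr
    obtain ⟨j, -, rfl⟩ := hr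
    rw [Fintype.sum_sum_type]
    have hbj := congrFun hb j
    simp only [Finset.sum_apply, Pi.smul_apply, smul_eq_mul, intVec] at hbj
    simp only [hX, Sum.elim_inl, Sum.elim_inr]
    push_cast
    have hsS : ∑ σs : {σc // σc ∈ S}, ((v σs.1) j : ℝ) * a σs.1
        = ∑ σc ∈ S, a σc * (((v σc) j : ℤ) : ℝ) := by
      rw [← Finset.sum_coe_sort S (fun σc => a σc * (((v σc) j : ℤ) : ℝ))]
      exact Finset.sum_congr rfl fun σs _ => mul_comm _ _
    have hsT : ∑ t : {t // t ∈ T}, (-(t.1 j : ℝ)) * b t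
        = -(∑ t : {t // t ∈ T}, b t * ((t.1 j : ℤ) : ℝ)) := by
      rw [← Finset.sum_neg_distrib]
      exact Finset.sum_congr rfl fun t _ => by ring
    rw [hsS, hsT, hbj]
    ring
  have hXmem := rat_solutions_span rows X hXsol
  set φ : (({σc // σc ∈ S} ⊕ {t // t ∈ T}) → ℝ) →ₗ[ℝ] ℝ :=
    LinearMap.proj (Sum.inl ⟨σ1, hσ1⟩) - LinearMap.proj (Sum.inl ⟨σ2, hσ2⟩) with hφ
  have hvanish : ∀ q : ({σc // σc ∈ S} ⊕ {t // t ∈ T}) → ℚ,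
      (∀ r ∈ rows, ∑ i, r i * q i = 0) →
      q (Sum.inl ⟨σ1, hσ1⟩) = q (Sum.inl ⟨σ2, hσ2⟩) := by
    intro q hq
    obtain ⟨N, hN, hNden⟩ := exists_common_den q
    choose zf hzf using hNden
    set W : Set (V n) → ℤ := fun s => if h : s ∈ S then zf (Sum.inl ⟨s, h⟩) else 0 with hW
    have hq' : ∀ j : Fin n, ∑ σs : {σc // σc ∈ S}, q (Sum.inl σs) * ((v σs.1) j : ℚ)
        = ∑ t : {t // t ∈ T}, q (Sum.inr t) * (t.1 j : ℚ) := by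
      intro j
      have hrj := hq _ (by rw [hrows, List.mem_map]; exact ⟨j, List.mem_finRange j, rfl⟩)
      rw [Fintype.sum_sum_type] at hrj
      simp only [Sum.elim_inl, Sum.elim_inr] at hrj
      have h1 : ∑ σs : {σc // σc ∈ S}, ((v σs.1) j : ℚ) * q (Sum.inl σs)
          = ∑ σs : {σc // σc ∈ S}, q (Sum.inl σs) * ((v σs.1) j : ℚ) :=
        Finset.sum_congr rfl fun _ _ => mul_comm _ _
      have h2 : ∑ t : {t // t ∈ T}, (-(t.1 j : ℚ)) * q (Sum.inr t)
          = -(∑ t : {t // t ∈ T}, q (Sum.inr t) * (t.1 j : ℚ)) := by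
        rw [← Finset.sum_neg_distrib]
        exact Finset.sum_congr rfl fun t _ => by ring
      rw [h1, h2] at hrj
      linarith
    have hWbal : ∀ τ' ∈ F, dimC τ' = d - 1 → τ ⊆ τ' →
        ∀ u : Set (V n) → Fin n → ℤ,
          (∀ σc ∈ facets F d τ', IsNormalVector σc τ' (u σc)) →
          memLat τ' (∑ σc ∈ facets F d τ', W σc • u σc) := by
      intro τ' hτ'F hτ'd hττ' u hu
      have hee : τ = τ' := face_eq_of_dim_eq hF.1 hτF hτ'F hττ' (by omega)
      subst hee
      rw [← hS] at hu ⊢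
      have hsplit : ∑ σc ∈ S, W σc • u σc
          = (∑ σc ∈ S, W σc • v σc) + ∑ σc ∈ S, W σc • (u σc - v σc) := by
        rw [← Finset.sum_add_distrib]
        refine Finset.sum_congr rfl fun σc _ => ?_
        rw [← smul_add]
        congr 1
        abel
      rw [hsplit]
      refine memLat_add ?_ (memLat_sum fun σc hc => ?_)
      · unfold memLat
        have hvec : intVec (∑ σc ∈ S, W σc • v σc)
            = ∑ t : {t // t ∈ T}, ((N : ℝ) * (q (Sum.inr t) : ℝ)) • intVec t.1 := by
          funext j
          have hL : intVec (∑ σc ∈ S, W σc • v σc) j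
              = ∑ σc ∈ S, (W σc : ℝ) * (((v σc) j : ℤ) : ℝ) := by
            simp only [intVec, Finset.sum_apply, Pi.smul_apply, smul_eq_mul]
            push_cast
            rfl
          have hR : (∑ t : {t // t ∈ T}, ((N : ℝ) * (q (Sum.inr t) : ℝ)) • intVec t.1) j
              = ∑ t : {t // t ∈ T}, (N : ℝ) * (q (Sum.inr t) : ℝ) * ((t.1 j : ℤ) : ℝ) := by
            simp only [Finset.sum_apply, Pi.smul_apply, smul_eq_mul, intVec]
          rw [hL, hR]
          have hsub1 : ∑ σc ∈ S, (W σc : ℝ) * (((v σc) j : ℤ) : ℝ)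
              = ∑ σs : {σc // σc ∈ S}, (N : ℝ) * ((q (Sum.inl σs) : ℝ) * (((v σs.1) j : ℤ) : ℝ)) := by
            rw [← Finset.sum_coe_sort S (fun σc => (W σc : ℝ) * (((v σc) j : ℤ) : ℝ))]
            refine Finset.sum_congr rfl fun σs _ => ?_
            have hW1 : W σs.1 = zf (Sum.inl σs) := by rw [hW]; exact dif_pos σs.2
            have hz : ((zf (Sum.inl σs) : ℤ) : ℝ) = (N : ℝ) * (q (Sum.inl σs) : ℝ) := by
              exact_mod_cast congrArg (fun x : ℚ => (x : ℝ)) (hzf (Sum.inl σs))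
            rw [hW1, hz]
            ring
          have hcast : ∑ σs : {σc // σc ∈ S}, (q (Sum.inl σs) : ℝ) * (((v σs.1) j : ℤ) : ℝ)
              = ∑ t : {t // t ∈ T}, (q (Sum.inr t) : ℝ) * ((t.1 j : ℤ) : ℝ) := by
            exact_mod_cast congrArg (fun x : ℚ => (x : ℝ)) (hq' j)
          rw [hsub1, ← Finset.mul_sum, hcast, Finset.mul_sum]
          exact Finset.sum_congr rfl fun t _ => by ring
        rw [hvec]
        refine Submodule.sum_mem _ fun t _ => Submodule.smul_mem _ _ ?_
        rw [hTspan]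
        exact Submodule.subset_span ⟨t.1, by simpa using t.2, rfl⟩
      · obtain ⟨hcF, hcd, hcs⟩ := facets_mem hc
        exact memLat_zsmul _ (normal_sub_mem hF.1 hτF hcF hcs (by omega)
          (hu σc hc) (hv σc hc))
    have hWc := hirr τ hτF W hWbal σ1 hσ1 σ2 hσ2
    have h1 : W σ1 = zf (Sum.inl ⟨σ1, hσ1⟩) := by rw [hW]; exact dif_pos hσ1
    have h2 : W σ2 = zf (Sum.inl ⟨σ2, hσ2⟩) := by rw [hW]; exact dif_pos hσ2
    have hzz : ((zf (Sum.inl ⟨σ1, hσ1⟩) : ℤ) : ℚ) = ((zf (Sum.inl ⟨σ2, hσ2⟩) : ℤ) : ℚ) := by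
      rw [← h1, ← h2] at *
      exact_mod_cast congrArg (fun x : ℤ => (x : ℚ)) hWc
    rw [hzf, hzf] at hzz
    exact mul_left_cancel₀ (by exact_mod_cast ne_of_gt hN) hzz
  have hker : Submodule.span ℝ {y : ({σc // σc ∈ S} ⊕ {t // t ∈ T}) → ℝ |
      ∃ q : ({σc // σc ∈ S} ⊕ {t // t ∈ T}) → ℚ,
        (∀ r ∈ rows, ∑ i, r i * q i = 0) ∧ y = fun i => (q i : ℝ)} ≤ LinearMap.ker φ := by
    rw [Submodule.span_le]
    rintro y ⟨q, hq, rfl⟩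
    simp only [SetLike.mem_coe, LinearMap.mem_ker, hφ, LinearMap.sub_apply,
      LinearMap.proj_apply]
    rw [hvanish q hq]
    ring
  have hfin := hker hXmem
  simp only [LinearMap.mem_ker, hφ, LinearMap.sub_apply, LinearMap.proj_apply, hX,
    Sum.elim_inl] at hfin
  linarith
/-- A tropical fan of pure dimension `d` is locally irreducible if and
only if it is normal and the star of every cone is connected through codimension
one. -/
theorem locallyIrreducible_iff_normal_and_starConnected {n d : ℕ}
    (F : Finset (Set (V n))) (hF : IsTropicalFan F d) :
    (∀ η ∈ F, IrreducibleAt F d η) ↔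
      (IsNormalTropicalFan F d ∧ ∀ η ∈ F, StarConnected F d η) := by
  constructor
  · intro hirr
    exact ⟨fwd_normal hF hirr, fwd_conn hF hirr⟩
  · rintro ⟨hn, hc⟩
    exact bwd_irr hF hn hc

end
end

section
/- Let Σ be a normal tropical fan of pure dimension d in ℝ^n such that the graph with vertex set Σ_d and an edge between σ and σ' whenever some τ ∈ Σ_{d−1} satisfies τ ⊂ σ and τ ⊂ σ' is connected. Then every Minkowski weight of dimension d on Σ is constant; equivalently, MW_d(Σ) is the free abelian group generated by the weight [Σ] constantly equal to 1. -/
/- Formalization of polyhedral-geometry notions: rational fans in ℝⁿ with lattice ℤⁿ,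
tropical fans (balancing condition), conewise integral linear functions, Minkowski
weights, etc., following the paper "Homology of tropical fans" by Amini–Piquerez. -/

open Classical MvPolynomial
open scoped TensorProduct DirectSum

noncomputable section

namespace Aux

variable {n : ℕ}

lemma intVec_add' (a b : Fin n → ℤ) : intVec (a + b) = intVec a + intVec b := by
  funext i; simp [intVec]

lemma intVec_smul (k : ℤ) (a : Fin n → ℤ) : intVec (k • a) = (k : ℝ) • intVec a := by
  funext i; simp [intVec]

lemma intVec_sub (a b : Fin n → ℤ) : intVec (a - b) = intVec a - intVec b := by
  funext i; simp [intVec]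

lemma intVec_zero' : intVec (0 : Fin n → ℤ) = 0 := by funext i; simp [intVec]

lemma intVec_neg' (a : Fin n → ℤ) : intVec (-a) = -intVec a := by funext i; simp [intVec]

lemma intVec_sum {ι : Type*} (s : Finset ι) (f : ι → Fin n → ℤ) :
    intVec (∑ i ∈ s, f i) = ∑ i ∈ s, intVec (f i) := by
  funext j
  simp only [intVec, Finset.sum_apply]
  push_cast
  rfl

lemma pairZ_zero (L : Fin n → ℤ) : pairZ L 0 = 0 := by simp [pairZ]

lemma pairZ_add (L a b : Fin n → ℤ) : pairZ L (a + b) = pairZ L a + pairZ L b := by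
  simp [pairZ, mul_add, Finset.sum_add_distrib]

lemma pairZ_neg (L a : Fin n → ℤ) : pairZ L (-a) = -pairZ L a := by
  simp [pairZ, Finset.sum_neg_distrib]

lemma pairZ_sub (L a b : Fin n → ℤ) : pairZ L (a - b) = pairZ L a - pairZ L b := by
  simp [sub_eq_add_neg, pairZ_add, pairZ_neg]

lemma pairZ_smul (L : Fin n → ℤ) (k : ℤ) (a : Fin n → ℤ) :
    pairZ L (k • a) = k * pairZ L a := by
  simp [pairZ, Finset.mul_sum, mul_left_comm]

lemma pairR_intVec (L v : Fin n → ℤ) : pairR L (intVec v) = (pairZ L v : ℝ) := by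
  simp [pairR, pairZ, intVec]

/-- `pairR L` as an `ℝ`-linear map. -/
def LR (L : Fin n → ℤ) : (V n) →ₗ[ℝ] ℝ :=
  ∑ i, (L i : ℝ) • (LinearMap.proj i : (V n) →ₗ[ℝ] ℝ)

lemma LR_apply (L : Fin n → ℤ) (x : V n) : LR L x = pairR L x := by
  simp [LR, pairR]

/-- Rational cone facts. -/
lemma cone_zero_mem {σ : Set (V n)} (h : IsRationalCone σ) : (0 : V n) ∈ σ := by
  obtain ⟨S, rfl⟩ := h
  exact ⟨fun _ => 0, fun _ => le_refl 0, by simp⟩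

lemma cone_gen_mem {σ : Set (V n)} {S : Finset (Fin n → ℤ)}
    (hS : σ = {x | ∃ lam : (Fin n → ℤ) → ℝ, (∀ v, 0 ≤ lam v) ∧
      x = ∑ v ∈ S, lam v • intVec v}) {v : Fin n → ℤ} (hv : v ∈ S) : intVec v ∈ σ := by
  subst hS
  refine ⟨fun u => if u = v then 1 else 0, fun u => by positivity, ?_⟩
  rw [Finset.sum_eq_single v]
  · simp
  · intro b _ hb; simp [hb]
  · intro h; exact absurd hv h

lemma cone_smul_mem {σ : Set (V n)} (h : IsRationalCone σ) {c : ℝ} (hc : 0 ≤ c)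
    {x : V n} (hx : x ∈ σ) : c • x ∈ σ := by
  obtain ⟨S, rfl⟩ := h
  obtain ⟨lam, hlam, rfl⟩ := hx
  exact ⟨fun v => c * lam v, fun v => mul_nonneg hc (hlam v),
    by rw [Finset.smul_sum]; simp [smul_smul]⟩

lemma cone_span {σ : Set (V n)} {S : Finset (Fin n → ℤ)}
    (hS : σ = {x | ∃ lam : (Fin n → ℤ) → ℝ, (∀ v, 0 ≤ lam v) ∧
      x = ∑ v ∈ S, lam v • intVec v}) :
    Submodule.span ℝ σ = Submodule.span ℝ (intVec '' ↑S) := by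
  apply le_antisymm
  · rw [Submodule.span_le]
    rintro x hx
    rw [hS] at hx
    obtain ⟨lam, _, rfl⟩ := hx
    exact Submodule.sum_mem _ fun v hv =>
      Submodule.smul_mem _ _ (Submodule.subset_span ⟨v, hv, rfl⟩)
  · rw [Submodule.span_le]
    rintro _ ⟨v, hv, rfl⟩
    exact Submodule.subset_span (cone_gen_mem hS hv)

/-- Existence of an integer functional vanishing on integer vectors `T` but not at `x`,
given that `x` is not in the real span of `T`. -/
lemma exists_int_functional (T : Finset (Fin n → ℤ)) (x : Fin n → ℤ)
    (hx : intVec x ∉ Submodule.span ℝ (intVec '' ↑T)) :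
    ∃ L : Fin n → ℤ, (∀ t ∈ T, pairZ L t = 0) ∧ pairZ L x ≠ 0 := by
  classical
  set ratVec : (Fin n → ℤ) → (Fin n → ℚ) := fun v i => (v i : ℚ) with hratVec
  -- ℚ-linear map to ℝ^n
  let q2r : (Fin n → ℚ) →ₗ[ℚ] (Fin n → ℝ) :=
    { toFun := fun y i => (y i : ℝ)
      map_add' := by
        intro a b; funext i
        simp only [Pi.add_apply]; push_cast; ring
      map_smul' := by
        intro q a; funext i
        simp only [Pi.smul_apply, RingHom.id_apply, Rat.smul_def]; push_cast; ring }
  have hq2r : (fun y => q2r y) ∘ ratVec = intVec := by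
    funext v i; simp [q2r, ratVec, intVec]
  have hxq : ratVec x ∉ Submodule.span ℚ (ratVec '' ↑T) := by
    intro h
    apply hx
    have h2 := Submodule.apply_mem_span_image_of_mem_span q2r h
    rw [← Set.image_comp, hq2r] at h2
    have h3 : q2r (ratVec x) = intVec x := congrFun hq2r x
    rw [h3] at h2
    have h4 : Submodule.span ℚ (intVec '' (↑T : Set (Fin n → ℤ))) ≤
        (Submodule.span ℝ (intVec '' (↑T : Set (Fin n → ℤ)))).restrictScalars ℚ := by
      rw [Submodule.span_le]; exact Submodule.subset_span
    exact h4 h2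
  set W := Submodule.span ℚ (ratVec '' ↑T) with hW
  have hxq0 : (Submodule.Quotient.mk (ratVec x) : (Fin n → ℚ) ⧸ W) ≠ 0 := by
    intro h; exact hxq ((Submodule.Quotient.mk_eq_zero W).1 h)
  obtain ⟨f, hf⟩ : ∃ f : Module.Dual ℚ ((Fin n → ℚ) ⧸ W),
      f (Submodule.Quotient.mk (ratVec x)) ≠ 0 := by
    by_contra h
    push_neg at h
    exact hxq0 ((Module.forall_dual_apply_eq_zero_iff ℚ _).1 h)
  set lq : (Fin n → ℚ) →ₗ[ℚ] ℚ := f.comp W.mkQ with hlq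
  have hlqT : ∀ t ∈ T, lq (ratVec t) = 0 := by
    intro t ht
    have : ratVec t ∈ W := Submodule.subset_span ⟨t, ht, rfl⟩
    simp [lq, Submodule.Quotient.mk_eq_zero, this, (Submodule.Quotient.mk_eq_zero W).2 this]
  have hlqx : lq (ratVec x) ≠ 0 := hf
  -- coefficient representation
  set c : Fin n → ℚ := fun i => lq (fun j => if i = j then 1 else 0) with hc
  have hrep : ∀ y : Fin n → ℚ, lq y = ∑ i, y i * c i := by
    intro y
    conv_lhs => rw [pi_eq_sum_univ y, map_sum]
    refine Finset.sum_congr rfl fun i _ => ?_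
    rw [map_smul, smul_eq_mul]
  -- clear denominators
  set D : Fin n → ℤ := fun i => ((c i).den : ℤ) with hD
  set N : ℤ := ∏ i, D i with hN
  have hDpos : ∀ i, 0 < D i := fun i => Int.natCast_pos.2 (c i).den_pos
  have hNne : (N : ℚ) ≠ 0 := by
    rw [hN]; push_cast
    exact Finset.prod_ne_zero_iff.2 fun i _ => by exact_mod_cast (hDpos i).ne'
  set L : Fin n → ℤ := fun i => (c i).num * ∏ j ∈ Finset.univ.erase i, D j with hL
  have hLC : ∀ i, (L i : ℚ) = (N : ℚ) * c i := by
    intro i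
    have h1 : N = D i * ∏ j ∈ Finset.univ.erase i, D j :=
      (Finset.mul_prod_erase Finset.univ D (Finset.mem_univ i)).symm
    have h2 : ((c i).den : ℚ) * c i = ((c i).num : ℚ) := by
      rw [mul_comm]; exact_mod_cast Rat.mul_den_eq_num (c i)
    rw [hL, h1]
    simp only [hD]
    push_cast
    rw [← h2]
    ring
  have hpair : ∀ v : Fin n → ℤ, (pairZ L v : ℚ) = (N : ℚ) * lq (ratVec v) := by
    intro v
    rw [hrep]
    unfold pairZ
    push_cast
    rw [Finset.mul_sum]
    refine Finset.sum_congr rfl fun i _ => ?_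
    rw [hLC i]
    simp [ratVec]
    ring
  refine ⟨L, fun t ht => ?_, fun h => ?_⟩
  · have := hpair t
    rw [hlqT t ht, mul_zero] at this
    exact_mod_cast this
  · have := hpair x
    rw [h] at this
    simp only [Int.cast_zero] at this
    exact hlqx (by
      rcases mul_eq_zero.1 this.symm with h1 | h1
      · exact absurd h1 hNne
      · exact h1)

/-- Existence of a normal vector for a codimension-one pair of rational cones. -/
lemma exists_normal {d : ℕ} (hd : 1 ≤ d) (σ τ : Set (V n))
    (hσr : IsRationalCone σ) (hτr : IsRationalCone τ) (hsub : τ ⊆ σ)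
    (hdσ : dimC σ = d) (hdτ : dimC τ = d - 1) :
    ∃ v : Fin n → ℤ, IsNormalVector σ τ v := by
  classical
  obtain ⟨S, hS⟩ := id hσr
  obtain ⟨T, hT⟩ := id hτr
  have hspanσ := cone_span hS
  have hspanτ := cone_span hT
  have hτσ : Submodule.span ℝ τ ≤ Submodule.span ℝ σ := Submodule.span_mono hsub
  have hlt : Module.finrank ℝ (Submodule.span ℝ τ) < Module.finrank ℝ (Submodule.span ℝ σ) := by
    rw [show Module.finrank ℝ (Submodule.span ℝ τ) = d - 1 from hdτ,
      show Module.finrank ℝ (Submodule.span ℝ σ) = d from hdσ]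
    omega
  -- a generator of σ outside span τ
  obtain ⟨x, hxS, hxτ⟩ : ∃ x ∈ S, intVec x ∉ Submodule.span ℝ τ := by
    by_contra h
    push_neg at h
    have : Submodule.span ℝ σ ≤ Submodule.span ℝ τ := by
      rw [hspanσ, Submodule.span_le]
      rintro _ ⟨v, hv, rfl⟩
      exact h v hv
    exact absurd (Submodule.finrank_mono this) (by omega)
  have hxσ : intVec x ∈ σ := cone_gen_mem hS hxS
  have hxspanσ : memLat σ x := Submodule.subset_span hxσ
  have hxτ' : intVec x ∉ Submodule.span ℝ (intVec '' ↑T) := by rwa [← hspanτ]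
  obtain ⟨L, hLT, hLx⟩ := exists_int_functional T x hxτ'
  -- pairR L vanishes on span τ
  have hLτ : ∀ y ∈ Submodule.span ℝ τ, LR L y = 0 := by
    intro y hy
    have : Submodule.span ℝ τ ≤ LinearMap.ker (LR L) := by
      rw [hspanτ, Submodule.span_le]
      rintro _ ⟨t, ht, rfl⟩
      simp only [SetLike.mem_coe, LinearMap.mem_ker]
      rw [LR_apply, pairR_intVec, hLT t ht, Int.cast_zero]
    exact (LinearMap.mem_ker).1 (this hy)
  -- the kernel cut of span σ equals span τ
  set K := LinearMap.ker (LR L) ⊓ Submodule.span ℝ σ with hK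
  have hτK : Submodule.span ℝ τ ≤ K :=
    le_inf (fun y hy => (LinearMap.mem_ker).2 (hLτ y hy)) hτσ
  have hKlt : K < Submodule.span ℝ σ := by
    refine lt_of_le_of_ne inf_le_right fun h => ?_
    have hxK : intVec x ∈ K := h ▸ hxspanσ
    have : LR L (intVec x) = 0 := (LinearMap.mem_ker).1 hxK.1
    rw [LR_apply, pairR_intVec] at this
    exact hLx (by exact_mod_cast this)
  have hKeq : Submodule.span ℝ τ = K := by
    refine Submodule.eq_of_le_of_finrank_le hτK ?_
    have h1 : Module.finrank ℝ K < Module.finrank ℝ (Submodule.span ℝ σ) :=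
      Submodule.finrank_lt_finrank_of_lt hKlt
    have e1 : Module.finrank ℝ ↥(Submodule.span ℝ σ) = d := hdσ
    have e2 : Module.finrank ℝ ↥(Submodule.span ℝ τ) = d - 1 := hdτ
    omega
  have crit : ∀ v : Fin n → ℤ, memLat σ v → (memLat τ v ↔ pairZ L v = 0) := by
    intro v hv
    constructor
    · intro h
      have := hLτ _ h
      rw [LR_apply, pairR_intVec] at this
      exact_mod_cast this
    · intro h
      have : intVec v ∈ K := by
        refine ⟨(LinearMap.mem_ker).2 ?_, hv⟩
        rw [LR_apply, pairR_intVec, h, Int.cast_zero]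
      rw [← hKeq] at this
      exact this
  -- the subgroup of values
  set H : AddSubgroup ℤ :=
    { carrier := {k | ∃ v : Fin n → ℤ, memLat σ v ∧ pairZ L v = k}
      zero_mem' := ⟨0, by rw [memLat, intVec_zero']; exact Submodule.zero_mem _, pairZ_zero L⟩
      add_mem' := by
        rintro a b ⟨v, hv, rfl⟩ ⟨v', hv', rfl⟩
        exact ⟨v + v', by rw [memLat, intVec_add']; exact Submodule.add_mem _ hv hv',
          pairZ_add L v v'⟩
      neg_mem' := by
        rintro a ⟨v, hv, rfl⟩
        exact ⟨-v, by rw [memLat, intVec_neg']; exact Submodule.neg_mem _ hv, pairZ_neg L v⟩ }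
    with hH
  obtain ⟨m, hm⟩ := Int.subgroup_cyclic H
  have hxH : pairZ L x ∈ H := ⟨x, hxspanσ, rfl⟩
  have hm0 : m ≠ 0 := by
    rintro rfl
    rw [hm] at hxH
    obtain ⟨k, hk⟩ := AddSubgroup.mem_closure_singleton.1 hxH
    rw [smul_zero] at hk
    exact hLx hk.symm
  have hmH : m ∈ H := by
    rw [hm]
    exact AddSubgroup.mem_closure_singleton.2 ⟨1, one_smul _ _⟩
  obtain ⟨g₀, hg₀σ, hg₀m⟩ := hmH
  -- the decomposition property
  have P : ∀ w : Fin n → ℤ, memLat σ w ↔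
      ∃ u : Fin n → ℤ, ∃ k : ℤ, memLat τ u ∧ w = u + k • g₀ := by
    intro w
    constructor
    · intro hw
      have : pairZ L w ∈ H := ⟨w, hw, rfl⟩
      rw [hm] at this
      obtain ⟨k, hk⟩ := AddSubgroup.mem_closure_singleton.1 this
      refine ⟨w - k • g₀, k, ?_, by ring⟩
      have hmem : memLat σ (w - k • g₀) := by
        rw [memLat, intVec_sub, intVec_smul]
        exact Submodule.sub_mem _ hw (Submodule.smul_mem _ _ hg₀σ)
      rw [crit _ hmem, pairZ_sub, pairZ_smul, hg₀m, ← hk]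
      simp [smul_eq_mul]
    · rintro ⟨u, k, hu, rfl⟩
      rw [memLat, intVec_add', intVec_smul]
      exact Submodule.add_mem _ (hτσ hu) (Submodule.smul_mem _ _ hg₀σ)
  -- decompose x, get nonzero coefficient
  obtain ⟨u, k, hu, hxdec⟩ := (P x).1 hxspanσ
  have hk0 : k ≠ 0 := by
    rintro rfl
    rw [zero_smul, add_zero] at hxdec
    exact hxτ (hxdec ▸ hu)
  -- choose the sign
  set g : Fin n → ℤ := if 0 < k then g₀ else -g₀ with hg
  set k' : ℤ := if 0 < k then k else -k with hk'
  have hk'pos : 0 < k' := by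
    rw [hk']; split <;> omega
  have hxdec' : x = u + k' • g := by
    rw [hg, hk']
    split
    · exact hxdec
    · rw [smul_neg, neg_smul, neg_neg]; exact hxdec
  have hgσ : memLat σ g := by
    rw [hg]; split
    · exact hg₀σ
    · rw [memLat, intVec_neg']; exact Submodule.neg_mem _ hg₀σ
  have Pg : ∀ w : Fin n → ℤ, memLat σ w ↔
      ∃ u' : Fin n → ℤ, ∃ k'' : ℤ, memLat τ u' ∧ w = u' + k'' • g := by
    intro w
    rw [P w, hg]
    split
    · rfl
    · constructor
      · rintro ⟨u', k'', h1, h2⟩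
        exact ⟨u', -k'', h1, by rw [h2]; simp [smul_neg, neg_smul]⟩
      · rintro ⟨u', k'', h1, h2⟩
        exact ⟨u', -k'', h1, by rw [h2]; simp [smul_neg, neg_smul]⟩
  refine ⟨g, hgσ, ?_, Pg⟩
  -- sign condition: intVec g = y + z with y ∈ σ, z ∈ span τ
  have hcast : intVec x = intVec u + (k' : ℝ) • intVec g := by
    rw [hxdec', intVec_add', intVec_smul]
  have hk'R : (k' : ℝ) ≠ 0 := by exact_mod_cast hk'pos.ne'
  refine ⟨((k' : ℝ))⁻¹ • intVec x, cone_smul_mem hσr (by positivity) hxσ,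
    -(((k' : ℝ))⁻¹ • intVec u), Submodule.neg_mem _ (Submodule.smul_mem _ _ hu), ?_⟩
  have : (k' : ℝ) • intVec g = intVec x - intVec u := by
    rw [hcast]; abel
  calc intVec g = ((k' : ℝ))⁻¹ • ((k' : ℝ) • intVec g) := by
        rw [smul_smul, inv_mul_cancel₀ hk'R, one_smul]
    _ = ((k' : ℝ))⁻¹ • (intVec x - intVec u) := by rw [this]
    _ = ((k' : ℝ))⁻¹ • intVec x + -(((k' : ℝ))⁻¹ • intVec u) := by
        rw [smul_sub, sub_eq_add_neg]

end Aux

/-- Let `Σ` be a normal tropical fan of pure dimension `d` whose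
connectivity-through-codimension-one graph on the facets is connected. Then every
Minkowski weight of dimension `d` on `Σ` is constant. -/


theorem top_minkowski_weight_constant {n d : ℕ}
    (F : Finset (Set (V n))) (hF : IsTropicalFan F d)
    (hnormal : IsNormalTropicalFan F d)
    (hconn : ∀ σ ∈ conesK F d, ∀ σ' ∈ conesK F d,
      Relation.ReflTransGen (fun a b =>
        a ∈ conesK F d ∧ b ∈ conesK F d ∧
        ∃ τ ∈ conesK F (d - 1), τ ⊆ a ∧ τ ⊆ b) σ σ')
    (w : Set (V n) → ℤ) (hw : IsMinkowskiWeight F d w) :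
    ∃ c : ℤ, ∀ σ ∈ conesK F d, w σ = c := by
  classical
  have hstep : ∀ a b : Set (V n),
      (a ∈ conesK F d ∧ b ∈ conesK F d ∧
        ∃ τ ∈ conesK F (d - 1), τ ⊆ a ∧ τ ⊆ b) → w a = w b := by
    rintro a b ⟨ha, hb, τ, hτ, hτa, hτb⟩
    rw [conesK, Finset.mem_filter] at ha hb hτ
    by_cases hd : 1 ≤ d
    · -- main case: use normal vectors, balancing and normality
      have hτF : τ ∈ F := hτ.1
      have hτd : dimC τ = d - 1 := hτ.2
      have hv : ∀ s ∈ facets F d τ, ∃ v : Fin n → ℤ, IsNormalVector s τ v := by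
        intro s hs
        rw [facets, Finset.mem_filter] at hs
        exact Aux.exists_normal hd s τ (hF.1.rat s hs.1) (hF.1.rat τ hτF)
          hs.2.2 hs.2.1 hτd
      set v : Set (V n) → Fin n → ℤ := fun s =>
        if hs : s ∈ facets F d τ then Classical.choose (hv s hs) else 0 with hvdef
      have hvprop : ∀ s ∈ facets F d τ, IsNormalVector s τ (v s) := by
        intro s hs
        rw [hvdef]
        simp only [dif_pos hs]
        exact Classical.choose_spec (hv s hs)
      have hbal := hw τ hτF hτd v hvprop
      have hmem : (∑ s ∈ facets F d τ, ((w s : ℝ)) • intVec (v s)) ∈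
          Submodule.span ℝ τ := by
        rw [memLat, Aux.intVec_sum] at hbal
        simp only [Aux.intVec_smul] at hbal
        exact hbal
      have haf : a ∈ facets F d τ := by
        rw [facets, Finset.mem_filter]; exact ⟨ha.1, ha.2, hτa⟩
      have hbf : b ∈ facets F d τ := by
        rw [facets, Finset.mem_filter]; exact ⟨hb.1, hb.2, hτb⟩
      have h2 : (w a : ℝ) = (w b : ℝ) :=
        hnormal τ hτF hτd v hvprop (fun s => (w s : ℝ)) hmem a haf b hbf
      exact_mod_cast h2
    · -- degenerate case `d = 0`: all cones of dimension 0 are `{0}`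
      have hd0 : d = 0 := by omega
      subst hd0
      have key : ∀ c : Set (V n), c ∈ F → dimC c = 0 → c = {0} := by
        intro c hc hdim
        have h0 : (0 : V n) ∈ c := Aux.cone_zero_mem (hF.1.rat c hc)
        have hsp : Submodule.span ℝ c = ⊥ := by
          have h' : Module.finrank ℝ ↥(Submodule.span ℝ c) = 0 := hdim
          exact Submodule.finrank_eq_zero.1 h'
        refine Set.eq_singleton_iff_unique_mem.2 ⟨h0, fun y hy => ?_⟩
        have : y ∈ (⊥ : Submodule ℝ (V n)) := hsp ▸ Submodule.subset_span hy
        simpa using this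
      rw [key a ha.1 ha.2, key b hb.1 hb.2]
  rcases Finset.eq_empty_or_nonempty (conesK F d) with he | ⟨σ0, hσ0⟩
  · exact ⟨0, fun σ hσ => by rw [he] at hσ; simp at hσ⟩
  · refine ⟨w σ0, fun σ hσ => ?_⟩
    have key : ∀ y, Relation.ReflTransGen (fun a b =>
        a ∈ conesK F d ∧ b ∈ conesK F d ∧
        ∃ τ ∈ conesK F (d - 1), τ ⊆ a ∧ τ ⊆ b) σ y → w σ = w y := by
      intro y h
      induction h with
      | refl => rfl
      | tail h1 h2 ih => exact ih.trans (hstep _ _ h2)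
    exact key σ0 (hconn σ hσ σ0 hσ0)


end
end

section
/- Let Σ be a unimodular tropical fan of pure dimension d in ℝ^n and let deg : A^d(Σ) → ℤ be the unique ℤ-linear map with deg([x_σ]) = 1 for every σ ∈ Σ_d. Let a : Σ₁ → ℤ and set α := ∑_{ρ∈Σ₁} a_ρ·x_ρ. Then for every τ ∈ Σ_{d−1}: deg([α·x_τ]) = ∑_{ρ∈Σ₁ : τ∪{ρ}∈Σ_d} a_ρ − f_τ(∑_{ρ∈Σ₁ : τ∪{ρ}∈Σ_d} e_ρ), where f_τ is the unique linear form on span_ℝ(τ) with f_τ(e_ϱ) = a_ϱ for every ray ϱ of τ (the vector ∑_{ρ : τ∪{ρ}∈Σ_d} e_ρ lies in N_τ ⊆ span_ℝ(τ) by the balancing condition and unimodularity). In other words, deg([α·x_τ]) = −ord_τ(f) for the conewise integral linear function f on Σ taking value a_ρ at e_ρ for every ray ρ. -/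
/- Formalization of polyhedral-geometry notions: rational fans in ℝⁿ with lattice ℤⁿ,
tropical fans (balancing condition), conewise integral linear functions, Minkowski
weights, etc., following the paper "Homology of tropical fans" by Amini–Piquerez. -/

open Classical MvPolynomial
open scoped TensorProduct DirectSum

noncomputable section

/-- The rays (one-dimensional cones) of the fan. -/
def raysF {n : ℕ} (F : Finset (Set (V n))) : Finset (Set (V n)) :=
  F.filter fun ρ => dimC ρ = 1

/-- The type of rays of the fan `F`. -/
abbrev RayT {n : ℕ} (F : Finset (Set (V n))) : Type := {ρ : Set (V n) // ρ ∈ raysF F}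

/-- The rays of the cone `σ` in the fan `F`. -/
def raysOfCone {n : ℕ} (F : Finset (Set (V n))) (σ : Set (V n)) :
    Finset (Set (V n)) :=
  (raysF F).filter fun ρ => ρ ⊆ σ

/-- The fan `F` is simplicial: every cone has exactly `dim σ` rays and is generated by
them (every element of `σ` is a sum of elements of the rays of `σ`). -/
def IsSimplicial {n : ℕ} (F : Finset (Set (V n))) : Prop :=
  ∀ σ ∈ F, (raysOfCone F σ).card = dimC σ ∧
    σ = {x | ∃ y : Set (V n) → V n, (∀ ρ ∈ raysOfCone F σ, y ρ ∈ ρ) ∧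
             x = ∑ ρ ∈ raysOfCone F σ, y ρ}

/-- `v = e_ρ` is the primitive generator of the ray `ρ`: the generator of the rank-one
lattice `N_ρ` lying in `ρ`. -/
def IsPrimitiveGen {n : ℕ} (ρ : Set (V n)) (v : Fin n → ℤ) : Prop :=
  v ≠ 0 ∧ intVec v ∈ ρ ∧ ∀ w : Fin n → ℤ, memLat ρ w → ∃ k : ℤ, w = k • v

/-- The fan `F` with primitive ray generators `e` is unimodular: simplicial, and for
every cone `σ`, the vectors `e_ρ`, `ρ` a ray of `σ`, form a `ℤ`-basis of `N_σ`. -/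
def IsUnimodular {n : ℕ} (F : Finset (Set (V n))) (e : Set (V n) → Fin n → ℤ) : Prop :=
  IsSimplicial F ∧
  ∀ σ ∈ F, ∀ w : Fin n → ℤ, memLat σ w →
    ∃! c : Set (V n) → ℤ, (∀ ρ, ρ ∉ raysOfCone F σ → c ρ = 0) ∧
      w = ∑ ρ ∈ raysOfCone F σ, c ρ • e ρ

/-- The monomial `x_σ = ∏_{ρ ray of σ} x_ρ` in the polynomial ring on the rays. -/
def xCone {n : ℕ} (F : Finset (Set (V n))) (σ : Set (V n)) :
    MvPolynomial (RayT F) ℤ :=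
  ∏ ρ ∈ Finset.univ.filter (fun ρ : RayT F => ρ.1 ⊆ σ), X ρ

/-- The finite set `S` of rays forms the set of rays of a cone of `F`. -/
def FormsCone {n : ℕ} (F : Finset (Set (V n))) (S : Finset (RayT F)) : Prop :=
  ∃ σ ∈ F, ∀ ρ : RayT F, ρ ∈ S ↔ ρ.1 ⊆ σ

/-- The ideal `I` generated by the monomials `x_{ρ₁} ⋯ x_{ρ_k}` over subsets of
distinct rays not forming the set of rays of a cone of `F`. -/
def idealI {n : ℕ} (F : Finset (Set (V n))) : Ideal (MvPolynomial (RayT F) ℤ) :=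
  Ideal.span {p | ∃ S : Finset (RayT F), ¬ FormsCone F S ∧ p = ∏ ρ ∈ S, X ρ}

/-- The linear polynomial `x_ℓ = ∑_ρ ℓ(e_ρ) x_ρ` associated with `ℓ ∈ M`. -/
def xLin {n : ℕ} (F : Finset (Set (V n))) (e : Set (V n) → Fin n → ℤ)
    (ℓ : Fin n → ℤ) : MvPolynomial (RayT F) ℤ :=
  ∑ ρ : RayT F, C (pairZ ℓ (e ρ.1)) * X ρ

/-- The ideal `J` generated by the linear polynomials `∑_ρ ℓ(e_ρ) x_ρ`, `ℓ ∈ M`. -/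
def idealJ {n : ℕ} (F : Finset (Set (V n))) (e : Set (V n) → Fin n → ℤ) :
    Ideal (MvPolynomial (RayT F) ℤ) :=
  Ideal.span {p | ∃ ℓ : Fin n → ℤ, p = xLin F e ℓ}

/-- The defining ideal `I + J` of the Chow ring. -/
def chowIdeal {n : ℕ} (F : Finset (Set (V n))) (e : Set (V n) → Fin n → ℤ) :
    Ideal (MvPolynomial (RayT F) ℤ) := idealI F + idealJ F e

/-- The Chow ring `A•(Σ) = ℤ[x_ρ : ρ ∈ Σ₁]/(I + J)`. -/
abbrev ChowRing {n : ℕ} (F : Finset (Set (V n))) (e : Set (V n) → Fin n → ℤ) : Type :=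
  MvPolynomial (RayT F) ℤ ⧸ chowIdeal F e

/-- The subgroup `Z^k(Σ) = ⊕_{σ ∈ Σ_k} ℤ·x_σ` of the polynomial ring. -/
def Zgroup {n : ℕ} (F : Finset (Set (V n))) (k : ℕ) :
    AddSubgroup (MvPolynomial (RayT F) ℤ) :=
  AddSubgroup.closure {p | ∃ σ ∈ conesK F k, p = xCone F σ}

/-- The degree-`k` graded piece `A^k(Σ)` of the Chow ring: the image of the homogeneous
polynomials of degree `k` in the quotient. -/
def Apiece {n : ℕ} (F : Finset (Set (V n))) (e : Set (V n) → Fin n → ℤ) (k : ℕ) :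
    AddSubgroup (ChowRing F e) :=
  AddSubgroup.closure
    {y | ∃ P : MvPolynomial (RayT F) ℤ, P.IsHomogeneous k ∧
         y = Ideal.Quotient.mk (chowIdeal F e) P}

/-- `m` is the order of vanishing `ord_τ(f)` of `f` along the codimension-one cone `τ`,
computed with some (equivalently, by well-definedness, any) choice of normal vectors
`v` and of representatives `L σ ∈ M` of `f` on the cones `σ`. -/
def IsOrderAt {n : ℕ} (F : Finset (Set (V n))) (d : ℕ) (f : V n → ℝ)
    (τ : Set (V n)) (m : ℤ) : Prop :=
  ∃ v L : Set (V n) → Fin n → ℤ,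
    (∀ σ ∈ facets F d τ, IsNormalVector σ τ (v σ)) ∧
    (∀ σ ∈ F, ∀ x ∈ σ, f x = pairR (L σ) x) ∧
    m = -(∑ σ ∈ facets F d τ, pairZ (L σ) (v σ))
        + pairZ (L τ) (∑ σ ∈ facets F d τ, v σ)

/-! ### Auxiliary lemmas for `deg_divisor_formula` -/

section Aux

lemma int_mul_den' {q : ℚ} {k : ℤ} (h : (q.den : ℤ) ∣ k) : ∃ z : ℤ, (z : ℚ) = (k : ℚ) * q := by
  obtain ⟨t, ht⟩ := h
  refine ⟨t * q.num, ?_⟩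
  have hq : (q.den : ℚ) * q = (q.num : ℚ) := by
    rw [mul_comm]; exact Rat.mul_den_eq_num q
  rw [ht]; push_cast
  rw [mul_comm ((q.den : ℚ)) ((t : ℚ)), mul_assoc, hq]

/-- The coordinatewise cast `ℚ^n → ℝ^n` as a `ℚ`-linear map. -/
def castLin' (n : ℕ) : (Fin n → ℚ) →ₗ[ℚ] (V n) :=
  LinearMap.pi (fun i => (Algebra.linearMap ℚ ℝ).comp (LinearMap.proj i))

/-- A family of integer vectors that is linearly independent over `ℝ` admits, for each
index `j0`, an integral linear form vanishing on all other members of the family and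
taking a positive value `m` at the `j0`-th member. -/
lemma exists_int_dual {n : ℕ} {ι : Type} [Fintype ι] (g : ι → (Fin n → ℤ))
    (hli : LinearIndependent ℝ (fun j => intVec (g j))) (j0 : ι) :
    ∃ (ℓ : Fin n → ℤ) (m : ℤ), 0 < m ∧ ∀ j, pairZ ℓ (g j) = if j = j0 then m else 0 := by
  have hinj : Function.Injective fun r : ℚ => r • (1 : ℝ) := by
    intro a b h
    simpa [Rat.smul_one_eq_cast, Rat.cast_injective.eq_iff] using h
  have hliq : LinearIndependent ℚ (fun j => intVec (g j)) := hli.restrict_scalars hinj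
  set gq : ι → (Fin n → ℚ) := fun j i => (g j i : ℚ) with hgq
  have hcomp : (castLin' n) ∘ gq = fun j => intVec (g j) := by
    funext j; funext i; simp [castLin', intVec, gq]
  have hind : LinearIndependent ℚ gq := by
    apply LinearIndependent.of_comp (castLin' n)
    rw [hcomp]; exact hliq
  have hginj : Function.Injective gq := hind.injective
  have hs : LinearIndepOn ℚ id (Set.range gq) :=
    (linearIndepOn_id_range_iff hginj).mpr hind
  let b := Module.Basis.extend hs
  have hmem : ∀ j, gq j ∈ hs.extend (Set.subset_univ (Set.range gq)) :=
    fun j => hs.subset_extend _ ⟨j, rfl⟩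
  let i0 : ↥(hs.extend (Set.subset_univ (Set.range gq))) := ⟨gq j0, hmem j0⟩
  let φ : (Fin n → ℚ) →ₗ[ℚ] ℚ := b.coord i0
  have hφ : ∀ j, φ (gq j) = if j = j0 then 1 else 0 := by
    intro j
    have h1 : gq j = b ⟨gq j, hmem j⟩ := (Module.Basis.extend_apply_self hs ⟨gq j, hmem j⟩).symm
    rw [show φ (gq j) = b.coord i0 (gq j) from rfl, h1, Module.Basis.coord_apply, Module.Basis.repr_self,
      Finsupp.single_apply]
    by_cases hj : j = j0
    · subst hj; simp [i0]
    · have : (⟨gq j, hmem j⟩ : ↥(hs.extend (Set.subset_univ (Set.range gq)))) ≠ i0 := by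
        intro h
        exact hj (hginj (by simpa [i0, Subtype.ext_iff] using h))
      simp [this, hj]
  set ℓq : Fin n → ℚ := fun i => φ (fun j => if i = j then 1 else 0) with hℓq
  have hφx : ∀ x : Fin n → ℚ, φ x = ∑ i, x i * ℓq i := by
    intro x
    conv_lhs => rw [pi_eq_sum_univ x, map_sum]
    apply Finset.sum_congr rfl
    intro i _
    rw [map_smul, smul_eq_mul]
  set m : ℤ := ∏ i, ((ℓq i).den : ℤ) with hm
  have hmpos : 0 < m := Finset.prod_pos (fun i _ => by exact_mod_cast (ℓq i).pos)
  have hz : ∀ i, ∃ z : ℤ, (z : ℚ) = (m : ℚ) * ℓq i := by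
    intro i
    exact int_mul_den' (Finset.dvd_prod_of_mem _ (Finset.mem_univ i))
  choose ℓ hℓ using hz
  refine ⟨ℓ, m, hmpos, fun j => ?_⟩
  have key : ((pairZ ℓ (g j) : ℤ) : ℚ) = (m : ℚ) * φ (gq j) := by
    rw [hφx (gq j), Finset.mul_sum]
    unfold pairZ
    push_cast
    apply Finset.sum_congr rfl
    intro i _
    rw [hℓ i]
    show ((m : ℚ) * ℓq i) * (g j i : ℚ) = (m : ℚ) * ((g j i : ℚ) * ℓq i)
    ring
  rw [hφ j] at key
  by_cases hj : j = j0
  · simp only [hj, if_true] at key ⊢; exact_mod_cast (by simpa using key)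
  · simp only [hj, if_false] at key ⊢; exact_mod_cast (by simpa using key)

lemma intVec_eq_zero_iff {n : ℕ} {v : Fin n → ℤ} : intVec v = 0 ↔ v = 0 := by
  constructor
  · intro h; funext i
    have := congrFun h i
    simpa [intVec] using this
  · rintro rfl; exact intVec_zero

lemma pairZ_smul_right {n : ℕ} (ℓ : Fin n → ℤ) (k : ℤ) (v : Fin n → ℤ) :
    pairZ ℓ (k • v) = k * pairZ ℓ v := by
  unfold pairZ
  rw [Finset.mul_sum]
  apply Finset.sum_congr rfl
  intro i _
  simp [Pi.smul_apply, smul_eq_mul]; ring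

lemma pairZ_sum_right {n : ℕ} {ι : Type*} (ℓ : Fin n → ℤ) (s : Finset ι)
    (f : ι → Fin n → ℤ) : pairZ ℓ (∑ i ∈ s, f i) = ∑ i ∈ s, pairZ ℓ (f i) := by
  classical
  induction s using Finset.induction_on with
  | empty => simp [pairZ]
  | insert _ _ h ih =>
    rw [Finset.sum_insert h, Finset.sum_insert h, ← ih]
    unfold pairZ
    rw [← Finset.sum_add_distrib]
    apply Finset.sum_congr rfl
    intro i _
    simp [Pi.add_apply]; ring

lemma zero_mem_ratCone {n : ℕ} {σ : Set (V n)} (h : IsRationalCone σ) : (0 : V n) ∈ σ := by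
  obtain ⟨S, rfl⟩ := h
  exact ⟨fun _ => 0, fun v => le_refl 0, by simp⟩

lemma ray_subset_span {n : ℕ} {ρ : Set (V n)} (h1 : dimC ρ = 1) {v : Fin n → ℤ}
    (hv0 : v ≠ 0) (hvρ : intVec v ∈ ρ) :
    ρ ⊆ (Submodule.span ℝ {intVec v} : Set (V n)) := by
  have hle : Submodule.span ℝ {intVec v} ≤ Submodule.span ℝ ρ := by
    rw [Submodule.span_le, Set.singleton_subset_iff]
    exact Submodule.subset_span hvρ
  have hne : intVec v ≠ 0 := fun h => hv0 (intVec_eq_zero_iff.mp h)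
  have h2 : Module.finrank ℝ (Submodule.span ℝ ({intVec v} : Set (V n))) = 1 :=
    finrank_span_singleton hne
  have heq : Submodule.span ℝ ({intVec v} : Set (V n)) = Submodule.span ℝ ρ := by
    apply Submodule.eq_of_le_of_finrank_le hle
    rw [h2]
    exact le_of_eq h1
  intro x hx
  rw [heq]
  exact Submodule.subset_span hx

end Aux

set_option maxHeartbeats 2000000 in
/-- Let `Σ` be a unimodular tropical fan of pure dimension `d`,
`deg : A^d(Σ) → ℤ` the degree map, `a : Σ₁ → ℤ` and `α := ∑_ρ a_ρ x_ρ`. For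
`τ ∈ Σ_{d-1}`, writing `∑_{ρ : τ∪{ρ} ∈ Σ_d} e_ρ = ∑_{ϱ ray of τ} c_ϱ e_ϱ` (the
decomposition in the basis of `N_τ` given by unimodularity, so that the value of the
linear form `f_τ` on this vector is `∑_ϱ c_ϱ a_ϱ`), one has
`deg([α·x_τ]) = ∑_{ρ : τ∪{ρ} ∈ Σ_d} a_ρ − ∑_ϱ c_ϱ a_ϱ`, i.e. `deg([α·x_τ]) = −ord_τ(f)`
for the conewise linear function `f` taking value `a_ρ` at `e_ρ`. -/

theorem deg_divisor_formula {n d : ℕ}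
    (F : Finset (Set (V n))) (hF : IsTropicalFan F d)
    (e : Set (V n) → Fin n → ℤ) (he : ∀ ρ ∈ raysF F, IsPrimitiveGen ρ (e ρ))
    (hu : IsUnimodular F e)
    (D : (Apiece F e d) →+ ℤ)
    (hD : ∀ σ ∈ conesK F d, ∀ y : Apiece F e d,
      (y : ChowRing F e) = Ideal.Quotient.mk (chowIdeal F e) (xCone F σ) → D y = 1)
    (a : Set (V n) → ℤ)
    (τ : Set (V n)) (hτ : τ ∈ F) (hτd : dimC τ = d - 1)
    (c : Set (V n) → ℤ) (hc0 : ∀ ϱ, ϱ ∉ raysOfCone F τ → c ϱ = 0)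
    (hc : (∑ ρ ∈ Finset.univ.filter (fun ρ : RayT F =>
              ¬ ρ.1 ⊆ τ ∧ ∃ σ ∈ conesK F d, τ ⊆ σ ∧ ρ.1 ⊆ σ), e ρ.1)
          = ∑ ϱ ∈ raysOfCone F τ, c ϱ • e ϱ)
    (y : Apiece F e d)
    (hy : (y : ChowRing F e) = Ideal.Quotient.mk (chowIdeal F e)
      ((∑ ρ : RayT F, C (a ρ.1) * X ρ) * xCone F τ)) :
    D y = (∑ ρ ∈ Finset.univ.filter (fun ρ : RayT F =>
              ¬ ρ.1 ⊆ τ ∧ ∃ σ ∈ conesK F d, τ ⊆ σ ∧ ρ.1 ⊆ σ), a ρ.1)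
          - (∑ ϱ ∈ raysOfCone F τ, c ϱ * a ϱ) := by
  classical
  obtain ⟨hfan, hpure, _hbal⟩ := hF
  have hsimp := hu.1
  set mkQ := Ideal.Quotient.mk (chowIdeal F e) with hmkQ
  have hfilt_img : ∀ σ : Set (V n), raysOfCone F σ =
      (Finset.univ.filter (fun ρ : RayT F => ρ.1 ⊆ σ)).image Subtype.val := by
    intro σ
    ext μ
    simp only [raysOfCone, Finset.mem_filter, Finset.mem_image, Finset.mem_univ, true_and]
    constructor
    · rintro ⟨h1, h2⟩; exact ⟨⟨μ, h1⟩, h2, rfl⟩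
    · rintro ⟨ρ', h2, rfl⟩; exact ⟨ρ'.2, h2⟩
  have hfilt_card : ∀ σ : Set (V n),
      (Finset.univ.filter (fun ρ : RayT F => ρ.1 ⊆ σ)).card = (raysOfCone F σ).card := by
    intro σ; rw [hfilt_img σ, Finset.card_image_of_injective _ Subtype.val_injective]
  rcases Nat.eq_zero_or_pos d with hd0 | hd
  · subst hd0
    have hray : ∀ μ, μ ∉ raysF F := by
      intro μ hμ
      obtain ⟨hμF, hμ1⟩ := Finset.mem_filter.mp hμ
      obtain ⟨η, hηM⟩ := Finset.exists_maximal (s := F.filter fun η => μ ⊆ η)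
        ⟨μ, Finset.mem_filter.mpr ⟨hμF, subset_rfl⟩⟩
      have hη := hηM.1
      have hmax : ∀ x ∈ F.filter (fun η => μ ⊆ η), ¬ η < x :=
        fun x hx hlt => lt_irrefl _ (lt_of_lt_of_le hlt (hηM.2 hx hlt.le))
      obtain ⟨hηF, hμη⟩ := Finset.mem_filter.mp hη
      have hηmax : ∀ η' ∈ F, η ⊆ η' → η = η' := by
        intro η' hη' hsub
        by_contra hne
        exact hmax η' (Finset.mem_filter.mpr ⟨hη', hμη.trans hsub⟩)
          (lt_of_le_of_ne hsub hne)
      have hdη : dimC η = 0 := hpure η hηF hηmax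
      have hmono : Submodule.span ℝ μ ≤ Submodule.span ℝ η := Submodule.span_mono hμη
      have hle : dimC μ ≤ dimC η := Submodule.finrank_mono hmono
      omega
    have hempty : IsEmpty (RayT F) := ⟨fun ρ => hray ρ.1 ρ.2⟩
    have hy0 : (y : ChowRing F e) = 0 := by
      rw [hy]
      have hzero : (∑ ρ : RayT F, C (a ρ.1) * X ρ : MvPolynomial (RayT F) ℤ) = 0 := by
        haveI := hempty
        rw [Finset.univ_eq_empty, Finset.sum_empty]
      rw [hzero, zero_mul, map_zero]
    have hy00 : y = 0 := Subtype.ext (by simpa using hy0)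
    rw [hy00, map_zero]
    have h1 : (Finset.univ.filter (fun ρ : RayT F =>
        ¬ ρ.1 ⊆ τ ∧ ∃ σ ∈ conesK F 0, τ ⊆ σ ∧ ρ.1 ⊆ σ)) = ∅ := by
      haveI := hempty
      rw [Finset.univ_eq_empty, Finset.filter_empty]
    have h2 : raysOfCone F τ = ∅ := by
      apply Finset.eq_empty_of_forall_notMem
      intro μ hμ
      exact hray μ (Finset.mem_filter.mp hμ).1
    rw [h1, h2]; simp
  -- main case : d ≥ 1
  · have hd1 : d - 1 + 1 = d := Nat.succ_pred_eq_of_pos hd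
    set Tf : Finset (RayT F) := Finset.univ.filter (fun ρ : RayT F => ρ.1 ⊆ τ) with hTf
    have hTmem : ∀ ϱ : RayT F, ϱ ∈ Tf ↔ ϱ.1 ⊆ τ := by
      intro ϱ; rw [hTf, Finset.mem_filter]; simp
    have hTcard : Tf.card = d - 1 := by
      rw [hTf, hfilt_card τ, (hsimp τ hτ).1, hτd]
    have hxτ : xCone F τ = ∏ ϱ ∈ Tf, X ϱ := rfl
    have hkey : ∀ ρ : RayT F, ¬ ρ.1 ⊆ τ → ∀ σ ∈ F, dimC σ = d → τ ⊆ σ → ρ.1 ⊆ σ →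
        Finset.univ.filter (fun ρ' : RayT F => ρ'.1 ⊆ σ) = insert ρ Tf := by
      intro ρ hρ σ hσF hσd hτσ hρσ
      have hsub : insert ρ Tf ⊆ Finset.univ.filter (fun ρ' : RayT F => ρ'.1 ⊆ σ) := by
        intro ϱ hϱ
        rcases Finset.mem_insert.mp hϱ with h | h
        · subst h; exact Finset.mem_filter.mpr ⟨Finset.mem_univ _, hρσ⟩
        · exact Finset.mem_filter.mpr ⟨Finset.mem_univ _, ((hTmem ϱ).mp h).trans hτσ⟩
      refine (Finset.eq_of_subset_of_card_le hsub ?_).symm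
      rw [Finset.card_insert_of_notMem (fun h => hρ ((hTmem ρ).mp h)), hTcard, hd1,
        hfilt_card σ, (hsimp σ hσF).1, hσd]
    have hxσ : ∀ ρ : RayT F, ¬ ρ.1 ⊆ τ → ∀ σ ∈ F, dimC σ = d → τ ⊆ σ → ρ.1 ⊆ σ →
        xCone F σ = X ρ * xCone F τ := by
      intro ρ hρ σ hσF hσd hτσ hρσ
      show (∏ ϱ ∈ Finset.univ.filter (fun ρ' : RayT F => ρ'.1 ⊆ σ), X ϱ) = _
      rw [hkey ρ hρ σ hσF hσd hτσ hρσ,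
        Finset.prod_insert (fun h => hρ ((hTmem ρ).mp h)), hxτ]
    have hbad : ∀ ρ : RayT F, ¬ ρ.1 ⊆ τ → (¬ ∃ σ ∈ conesK F d, τ ⊆ σ ∧ ρ.1 ⊆ σ) →
        mkQ (X ρ * xCone F τ) = 0 := by
      intro ρ hρ hno
      have hρTf : ρ ∉ Tf := fun h => hρ ((hTmem ρ).mp h)
      have hprod : X ρ * xCone F τ = ∏ ϱ ∈ insert ρ Tf, X ϱ := by
        rw [Finset.prod_insert hρTf, hxτ]
      have hform : ¬ FormsCone F (insert ρ Tf) := by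
        rintro ⟨σ, hσF, hiff⟩
        have hρσ : ρ.1 ⊆ σ := (hiff ρ).mp (Finset.mem_insert_self _ _)
        have hfilteq : Finset.univ.filter (fun ρ' : RayT F => ρ'.1 ⊆ σ) = insert ρ Tf := by
          ext ϱ
          rw [Finset.mem_filter]
          constructor
          · intro h; exact (hiff ϱ).mpr h.2
          · intro h; exact ⟨Finset.mem_univ _, (hiff ϱ).mp h⟩
        have hσd : dimC σ = d := by
          rw [← (hsimp σ hσF).1, ← hfilt_card σ, hfilteq,
            Finset.card_insert_of_notMem hρTf, hTcard, hd1]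
        have hrays : raysOfCone F σ = insert ρ.1 (raysOfCone F τ) := by
          rw [hfilt_img σ, hfilteq, Finset.image_insert, hfilt_img τ, ← hTf]
        have hρτrays : ρ.1 ∉ raysOfCone F τ := by
          intro h
          exact hρ (Finset.mem_filter.mp h).2
        have hτσ : τ ⊆ σ := by
          intro x hx
          rw [(hsimp τ hτ).2] at hx
          obtain ⟨yv, hy1, hy2⟩ := hx
          rw [(hsimp σ hσF).2]
          refine ⟨fun μ => if μ = ρ.1 then 0 else yv μ, ?_, ?_⟩
          · intro μ hμ
            show (if μ = ρ.1 then 0 else yv μ) ∈ μ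
            by_cases hμρ : μ = ρ.1
            · rw [if_pos hμρ, hμρ]
              exact zero_mem_ratCone (hfan.rat ρ.1 (Finset.mem_filter.mp ρ.2).1)
            · rw [if_neg hμρ]
              rw [hrays] at hμ
              rcases Finset.mem_insert.mp hμ with h | h
              · exact absurd h hμρ
              · exact hy1 μ h
          · show x = ∑ μ ∈ raysOfCone F σ, (if μ = ρ.1 then 0 else yv μ)
            rw [hrays, Finset.sum_insert hρτrays, if_pos rfl, zero_add, hy2]
            refine Finset.sum_congr rfl (fun μ hμ => ?_)
            exact (if_neg (fun h : μ = ρ.1 => hρτrays (by rw [← h]; exact hμ))).symm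
        exact hno ⟨σ, Finset.mem_filter.mpr ⟨hσF, hσd⟩, hτσ, hρσ⟩
      rw [hprod]
      apply Ideal.Quotient.eq_zero_iff_mem.mpr
      show _ ∈ idealI F + idealJ F e
      rw [Ideal.add_eq_sup]
      exact Submodule.mem_sup_left (Ideal.subset_span ⟨insert ρ Tf, hform, rfl⟩)
    have hlin : ∀ ℓ : Fin n → ℤ, mkQ (xLin F e ℓ * xCone F τ) = 0 := by
      intro ℓ
      apply Ideal.Quotient.eq_zero_iff_mem.mpr
      apply Ideal.mul_mem_right
      show _ ∈ idealI F + idealJ F e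
      rw [Ideal.add_eq_sup]
      exact Submodule.mem_sup_right (Ideal.subset_span ⟨ℓ, rfl⟩)
    have hhomτ : (xCone F τ).IsHomogeneous (d - 1) := by
      have h := MvPolynomial.IsHomogeneous.prod Tf
        (fun ϱ : RayT F => (X ϱ : MvPolynomial (RayT F) ℤ)) (fun _ => 1)
        (fun ϱ _ => MvPolynomial.isHomogeneous_X _ _)
      rw [hxτ]
      simpa [Finset.sum_const, hTcard] using h
    have hWmem : ∀ ρ : RayT F, mkQ (X ρ * xCone F τ) ∈ Apiece F e d := by
      intro ρ
      apply AddSubgroup.subset_closure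
      refine ⟨X ρ * xCone F τ, ?_, rfl⟩
      have h := (MvPolynomial.isHomogeneous_X ℤ ρ).mul hhomτ
      rwa [show 1 + (d - 1) = d by omega] at h
    set W : RayT F → (Apiece F e d) := fun ρ => ⟨mkQ (X ρ * xCone F τ), hWmem ρ⟩ with hWdef
    have hWcoe : ∀ ρ : RayT F, (W ρ : ChowRing F e) = mkQ (X ρ * xCone F τ) := fun ρ => rfl
    have hcoeW : ∀ t : RayT F → ℤ,
        ((∑ ρ : RayT F, t ρ • W ρ : Apiece F e d) : ChowRing F e)
          = mkQ ((∑ ρ : RayT F, C (t ρ) * X ρ) * xCone F τ) := by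
      intro t
      rw [Finset.sum_mul, map_sum, AddSubmonoidClass.coe_finset_sum]
      refine Finset.sum_congr rfl (fun ρ _ => ?_)
      show t ρ • (W ρ : ChowRing F e) = mkQ (C (t ρ) * X ρ * xCone F τ)
      rw [hWcoe ρ, zsmul_eq_mul]
      conv_rhs => rw [mul_assoc, eq_intCast (C : ℤ →+* MvPolynomial (RayT F) ℤ) (t ρ),
        map_mul, map_intCast]
    have hyW : y = ∑ ρ : RayT F, a ρ.1 • W ρ := by
      apply Subtype.ext
      exact hy.trans (hcoeW (fun ρ => a ρ.1)).symm
    have hLI : LinearIndependent ℝ (fun ϱ' : {x // x ∈ Tf} => intVec (e ϱ'.1.1)) := by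
      rw [linearIndependent_iff_card_eq_finrank_span]
      have hspan : Submodule.span ℝ (Set.range (fun ϱ' : {x // x ∈ Tf} => intVec (e ϱ'.1.1)))
          = Submodule.span ℝ τ := by
        apply le_antisymm
        · rw [Submodule.span_le]
          rintro x ⟨ϱ', rfl⟩
          exact Submodule.subset_span (((hTmem ϱ'.1).mp ϱ'.2) ((he ϱ'.1.1 ϱ'.1.2).2.1))
        · rw [Submodule.span_le]
          intro x hx
          rw [(hsimp τ hτ).2] at hx
          obtain ⟨yv, hy1, hy2⟩ := hx
          rw [SetLike.mem_coe, hy2]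
          apply Submodule.sum_mem
          intro μ hμ
          obtain ⟨hμrF, hμτ⟩ := Finset.mem_filter.mp hμ
          have hμ1 : dimC μ = 1 := (Finset.mem_filter.mp hμrF).2
          have hprim := he μ hμrF
          have hsub := ray_subset_span hμ1 hprim.1 hprim.2.1
          have hyμ : yv μ ∈ Submodule.span ℝ ({intVec (e μ)} : Set (V n)) := hsub (hy1 μ hμ)
          refine Submodule.span_mono ?_ hyμ
          intro z hz
          rw [Set.mem_singleton_iff] at hz
          subst hz
          exact ⟨⟨⟨μ, hμrF⟩, (hTmem _).mpr hμτ⟩, rfl⟩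
      have hfr : Set.finrank ℝ (Set.range (fun ϱ' : {x // x ∈ Tf} => intVec (e ϱ'.1.1)))
          = d - 1 := by
        rw [Set.finrank, hspan]
        exact hτd
      rw [hfr, Fintype.card_coe, hTcard]
    have hDgood : ∀ ρ : RayT F, ¬ ρ.1 ⊆ τ → (∃ σ ∈ conesK F d, τ ⊆ σ ∧ ρ.1 ⊆ σ) →
        D (W ρ) = 1 := by
      rintro ρ hρ ⟨σ, hσ, hτσ, hρσ⟩
      obtain ⟨hσF, hσd⟩ := Finset.mem_filter.mp hσ
      apply hD σ hσ (W ρ)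
      rw [hWcoe ρ, hxσ ρ hρ σ hσF hσd hτσ hρσ]
    have hDbad : ∀ ρ : RayT F, ¬ ρ.1 ⊆ τ → (¬ ∃ σ ∈ conesK F d, τ ⊆ σ ∧ ρ.1 ⊆ σ) →
        D (W ρ) = 0 := by
      intro ρ h1 h2
      have hw0 : W ρ = 0 := Subtype.ext (by rw [hWcoe ρ]; exact hbad ρ h1 h2)
      rw [hw0, map_zero]
    have hsplit : ∀ f : RayT F → ℤ, (∑ ρ : RayT F, f ρ) =
        (∑ ϱ ∈ Tf, f ϱ)
        + ((∑ ρ ∈ Finset.univ.filter (fun ρ : RayT F =>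
              ¬ ρ.1 ⊆ τ ∧ ∃ σ ∈ conesK F d, τ ⊆ σ ∧ ρ.1 ⊆ σ), f ρ)
        + (∑ ρ ∈ Finset.univ.filter (fun ρ : RayT F =>
              ¬ ρ.1 ⊆ τ ∧ ¬ ∃ σ ∈ conesK F d, τ ⊆ σ ∧ ρ.1 ⊆ σ), f ρ)) := by
      intro f
      have h1 := Finset.sum_filter_add_sum_filter_not Finset.univ
        (fun ρ : RayT F => ρ.1 ⊆ τ) f
      have h2 := Finset.sum_filter_add_sum_filter_not
        (Finset.univ.filter (fun ρ : RayT F => ¬ ρ.1 ⊆ τ))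
        (fun ρ : RayT F => ∃ σ ∈ conesK F d, τ ⊆ σ ∧ ρ.1 ⊆ σ) f
      rw [Finset.filter_filter, Finset.filter_filter] at h2
      rw [← hTf] at h1
      linarith [h1, h2]
    have hDT : ∀ ϱ : RayT F, ϱ ∈ Tf → D (W ϱ) = - c ϱ.1 := by
      intro ϱ hϱ
      obtain ⟨ℓ, m, hm, hδ⟩ := exists_int_dual
        (fun ϱ' : {x // x ∈ Tf} => e ϱ'.1.1) hLI ⟨ϱ, hϱ⟩
      have hδ' : ∀ ϱ' : RayT F, ϱ' ∈ Tf → pairZ ℓ (e ϱ'.1) = if ϱ' = ϱ then m else 0 := by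
        intro ϱ' h'
        have h12 := hδ ⟨ϱ', h'⟩
        by_cases hee : ϱ' = ϱ
        · subst hee
          rw [if_pos rfl]
          rwa [if_pos (Subtype.ext rfl)] at h12
        · rw [if_neg hee]
          rwa [if_neg (fun hh => hee (congrArg Subtype.val hh))] at h12
      have hu0 : (∑ ρ' : RayT F, pairZ ℓ (e ρ'.1) • W ρ' : Apiece F e d) = 0 := by
        apply Subtype.ext
        rw [show ((0 : Apiece F e d) : ChowRing F e) = 0 from rfl,
          hcoeW (fun ρ' => pairZ ℓ (e ρ'.1))]
        exact hlin ℓ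
      have h0 : ∑ ρ' : RayT F, pairZ ℓ (e ρ'.1) * D (W ρ') = 0 := by
        have hh := congrArg D hu0
        rw [map_sum, map_zero] at hh
        simpa only [AddMonoidHom.map_zsmul, smul_eq_mul] using hh
      rw [hsplit (fun ρ' => pairZ ℓ (e ρ'.1) * D (W ρ'))] at h0
      have hTpart : ∑ ϱ' ∈ Tf, pairZ ℓ (e ϱ'.1) * D (W ϱ') = m * D (W ϱ) := by
        rw [Finset.sum_eq_single_of_mem ϱ hϱ
          (fun ϱ' h' hne => by rw [hδ' ϱ' h', if_neg hne, zero_mul]),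
          hδ' ϱ hϱ, if_pos rfl]
      have hGpart : (∑ ρ' ∈ Finset.univ.filter (fun ρ : RayT F =>
            ¬ ρ.1 ⊆ τ ∧ ∃ σ ∈ conesK F d, τ ⊆ σ ∧ ρ.1 ⊆ σ),
            pairZ ℓ (e ρ'.1) * D (W ρ'))
          = ∑ ρ' ∈ Finset.univ.filter (fun ρ : RayT F =>
            ¬ ρ.1 ⊆ τ ∧ ∃ σ ∈ conesK F d, τ ⊆ σ ∧ ρ.1 ⊆ σ), pairZ ℓ (e ρ'.1) := by
        refine Finset.sum_congr rfl (fun ρ' h' => ?_)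
        obtain ⟨-, h1, h2⟩ := Finset.mem_filter.mp h'
        rw [hDgood ρ' h1 h2, mul_one]
      have hBpart : (∑ ρ' ∈ Finset.univ.filter (fun ρ : RayT F =>
            ¬ ρ.1 ⊆ τ ∧ ¬ ∃ σ ∈ conesK F d, τ ⊆ σ ∧ ρ.1 ⊆ σ),
            pairZ ℓ (e ρ'.1) * D (W ρ')) = 0 := by
        refine Finset.sum_eq_zero (fun ρ' h' => ?_)
        obtain ⟨-, h1, h2⟩ := Finset.mem_filter.mp h'
        rw [hDbad ρ' h1 h2, mul_zero]
      have hGval : (∑ ρ' ∈ Finset.univ.filter (fun ρ : RayT F =>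
            ¬ ρ.1 ⊆ τ ∧ ∃ σ ∈ conesK F d, τ ⊆ σ ∧ ρ.1 ⊆ σ), pairZ ℓ (e ρ'.1))
          = c ϱ.1 * m := by
        rw [← pairZ_sum_right, hc, pairZ_sum_right, hfilt_img τ,
          Finset.sum_image (fun x _ y _ h => Subtype.val_injective h), ← hTf,
          Finset.sum_eq_single_of_mem ϱ hϱ
            (fun ϱ' h' hne => by
              rw [pairZ_smul_right, hδ' ϱ' h', if_neg hne, mul_zero]),
          pairZ_smul_right, hδ' ϱ hϱ, if_pos rfl]
      rw [hTpart, hGpart, hBpart, hGval] at h0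
      have hfin : m * (D (W ϱ) + c ϱ.1) = 0 := by ring_nf; linarith [h0]
      rcases mul_eq_zero.mp hfin with h | h
      · exact absurd h hm.ne'
      · linarith
    rw [hyW, map_sum]
    simp only [AddMonoidHom.map_zsmul, smul_eq_mul]
    rw [hsplit (fun ρ => a ρ.1 * D (W ρ))]
    have hT : ∑ ϱ ∈ Tf, a ϱ.1 * D (W ϱ) = - ∑ ϱ ∈ Tf, c ϱ.1 * a ϱ.1 := by
      rw [← Finset.sum_neg_distrib]
      refine Finset.sum_congr rfl (fun ϱ h => ?_)
      rw [hDT ϱ h]; ring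
    have hG : (∑ ρ ∈ Finset.univ.filter (fun ρ : RayT F =>
          ¬ ρ.1 ⊆ τ ∧ ∃ σ ∈ conesK F d, τ ⊆ σ ∧ ρ.1 ⊆ σ), a ρ.1 * D (W ρ))
        = ∑ ρ ∈ Finset.univ.filter (fun ρ : RayT F =>
          ¬ ρ.1 ⊆ τ ∧ ∃ σ ∈ conesK F d, τ ⊆ σ ∧ ρ.1 ⊆ σ), a ρ.1 := by
      refine Finset.sum_congr rfl (fun ρ' h' => ?_)
      obtain ⟨-, h1, h2⟩ := Finset.mem_filter.mp h'
      rw [hDgood ρ' h1 h2, mul_one]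
    have hB : (∑ ρ ∈ Finset.univ.filter (fun ρ : RayT F =>
          ¬ ρ.1 ⊆ τ ∧ ¬ ∃ σ ∈ conesK F d, τ ⊆ σ ∧ ρ.1 ⊆ σ), a ρ.1 * D (W ρ)) = 0 := by
      refine Finset.sum_eq_zero (fun ρ' h' => ?_)
      obtain ⟨-, h1, h2⟩ := Finset.mem_filter.mp h'
      rw [hDbad ρ' h1 h2, mul_zero]
    have hrays : ∑ μ ∈ raysOfCone F τ, c μ * a μ = ∑ ϱ ∈ Tf, c ϱ.1 * a ϱ.1 := by
      rw [hfilt_img τ, Finset.sum_image (fun x _ y _ h => Subtype.val_injective h), ← hTf]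
    rw [hT, hG, hB, hrays]
    ring


end
end
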